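/- arXiv:1301.2157 — 4 statements merged into one kernel-verified Lean document; each statement's English description precedes it below -/
import Mathlib

section
/- Let n, m be natural numbers with m ≤ n + 1, and let ℓ₁, …, ℓ_m be nonzero linear forms in ℂ[X,Y] that are pairwise non-proportional. Then the binary forms ℓ₁ⁿ, …, ℓ_mⁿ (the n-th powers) are linearly independent over ℂ. -/
open MvPolynomial

/-- The linear form `a*X + b*Y` in `ℂ[X,Y]`. -/
noncomputable def lin (a b : ℂ) : MvPolynomial (Fin 2) ℂ :=
  MvPolynomial.C a * MvPolynomial.X 0 + MvPolynomial.C b * MvPolynomial.X 1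

/-- The partial derivative `∂_X` (for `i = 0`) or `∂_Y` (for `i = 1`) as a linear map. -/
noncomputable def pd (i : Fin 2) :
    MvPolynomial (Fin 2) ℂ →ₗ[ℂ] MvPolynomial (Fin 2) ℂ :=
  (MvPolynomial.pderiv i).toLinearMap

/-- The apolarity operator `q(∂) = Σ q_{ij} ∂_X^i ∂_Y^j`, as a linear map on `ℂ[X,Y]`. -/
noncomputable def apolarL (q : MvPolynomial (Fin 2) ℂ) :
    MvPolynomial (Fin 2) ℂ →ₗ[ℂ] MvPolynomial (Fin 2) ℂ :=
  q.support.sum fun m => q.coeff m • (pd 0 ^ m 0 * pd 1 ^ m 1)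

/-- The apolarity pairing `⟨q, p⟩`: the value of the constant polynomial `q(∂)p`. -/
noncomputable def pairing (q p : MvPolynomial (Fin 2) ℂ) : ℂ :=
  MvPolynomial.coeff 0 (apolarL q p)

/-- The "directional derivative" operator `b' ∂_X - a' ∂_Y`, which kills `(a'X+b'Y)^k`. -/
noncomputable def Dop (a' b' : ℂ) :
    MvPolynomial (Fin 2) ℂ →ₗ[ℂ] MvPolynomial (Fin 2) ℂ :=
  b' • pd 0 - a' • pd 1

lemma lin_smul (c a b : ℂ) : c • lin a b = lin (c * a) (c * b) := by
  simp only [lin, smul_eq_C_mul, map_mul]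
  ring

lemma lin_ne_zero {a b : ℂ} (h : (a, b) ≠ (0, 0)) : lin a b ≠ 0 := by
  intro h0
  apply h
  have h1 := congrArg (MvPolynomial.eval ![1, 0]) h0
  have h2 := congrArg (MvPolynomial.eval ![0, 1]) h0
  simp [lin] at h1 h2
  simp [h1, h2]

lemma Dop_pow (a' b' a b : ℂ) (k : ℕ) :
    Dop a' b' (lin a b ^ (k + 1)) =
      (((k : ℂ) + 1) * (b' * a - a' * b)) • lin a b ^ k := by
  simp only [Dop, LinearMap.sub_apply, LinearMap.smul_apply, pd,
    Derivation.coeFn_coe, Derivation.leibniz_pow]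
  simp only [lin, smul_eq_C_mul]
  simp [pderiv_X]
  ring

lemma key : ∀ m n : ℕ, m ≤ n + 1 → ∀ a b : Fin m → ℂ,
    (∀ i, (a i, b i) ≠ (0, 0)) →
    (∀ i j, i ≠ j → a i * b j - a j * b i ≠ 0) →
    ∀ c : Fin m → ℂ, (∑ i, c i • lin (a i) (b i) ^ n) = 0 → ∀ i, c i = 0 := by
  intro m
  induction m with
  | zero => intro n _ a b _ _ c _ i; exact absurd i.2 (by simp)
  | succ m ih =>
    intro n hm a b hne hdet c hc
    match n, hm with
    | 0, hm =>
      have hm0 : m = 0 := by omega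
      subst hm0
      intro i
      fin_cases i
      rw [Fin.sum_univ_one, pow_zero] at hc
      simpa [smul_eq_zero] using hc
    | n + 1, hm =>
      set j : Fin (m + 1) := Fin.last m with hj
      have hD : (∑ i, (c i * (((n : ℂ) + 1) * (b j * a i - a j * b i))) •
          lin (a i) (b i) ^ n) = 0 := by
        have h := congrArg (Dop (a j) (b j)) hc
        rw [map_sum, map_zero] at h
        rw [← h]
        refine Finset.sum_congr rfl fun i _ => ?_
        rw [LinearMap.map_smul, Dop_pow, smul_smul]
      rw [Fin.sum_univ_castSucc] at hD
      have hjj : b j * a j - a j * b j = 0 := by ring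
      rw [hjj] at hD
      simp only [mul_zero, zero_smul, add_zero] at hD
      have hcast : ∀ i : Fin m,
          c i.castSucc * (((n : ℂ) + 1) * (b j * a i.castSucc - a j * b i.castSucc)) = 0 :=
        ih n (by omega) (fun i => a i.castSucc) (fun i => b i.castSucc)
          (fun i => hne _) (fun i k hik => hdet _ _ (by simpa using hik)) _ hD
      have hc0 : ∀ i : Fin (m + 1), i ≠ j → c i = 0 := by
        intro i hij
        obtain ⟨i', rfl⟩ := Fin.exists_castSucc_eq.mpr hij
        have h1 := hcast i'
        have h2 : ((n : ℂ) + 1) ≠ 0 := Nat.cast_add_one_ne_zero n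
        have h3 : b j * a i'.castSucc - a j * b i'.castSucc ≠ 0 := by
          have h4 := hdet i'.castSucc j (Fin.castSucc_lt_last i').ne
          intro h0; apply h4; linear_combination h0
        rcases mul_eq_zero.mp h1 with h | h
        · exact h
        · exact absurd h (mul_ne_zero h2 h3)
      intro i
      by_cases hij : i = j
      · rw [hij]
        have hlast : c j • lin (a j) (b j) ^ (n + 1) = 0 := by
          rw [← hc]
          exact (Finset.sum_eq_single_of_mem
            (f := fun i => c i • lin (a i) (b i) ^ (n + 1)) j (Finset.mem_univ j)
            (fun k _ hk => by simp only [hc0 k hk, zero_smul])).symm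
        rcases smul_eq_zero.mp hlast with h | h
        · exact h
        · exact absurd h (pow_ne_zero _ (lin_ne_zero (hne j)))
      · exact hc0 i hij

/-- Powers of pairwise non-proportional nonzero linear forms are linearly independent
when their number is at most n + 1. -/
theorem powers_of_linear_forms_linearIndependent
    (n m : ℕ) (hm : m ≤ n + 1) (a b : Fin m → ℂ)
    (hne : ∀ i, (a i, b i) ≠ (0, 0))
    (hprop : ∀ i j, i ≠ j → ∀ c : ℂ, lin (a i) (b i) ≠ c • lin (a j) (b j)) :
    LinearIndependent ℂ (fun i : Fin m => lin (a i) (b i) ^ n) := by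
  have hdet : ∀ i j, i ≠ j → a i * b j - a j * b i ≠ 0 := by
    intro i j hij h0
    by_cases hbj : b j = 0
    · have haj : a j ≠ 0 := fun h => hne j (by rw [h, hbj])
      have hbi : b i = 0 := by
        have h5 : a j * b i = 0 := by linear_combination -h0 + a i * hbj
        rcases mul_eq_zero.mp h5 with h | h
        · exact absurd h haj
        · exact h
      refine hprop i j hij (a i / a j) ?_
      rw [lin_smul]
      congr 1
      · field_simp
      · rw [hbi, hbj, mul_zero]
    · refine hprop i j hij (b i / b j) ?_
      rw [lin_smul]
      congr 1
      · field_simp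
        linear_combination h0
      · field_simp
  rw [Fintype.linearIndependent_iff]
  intro c hc
  exact key m n hm a b hne hdet c hc
end

section
/- Let n ≥ k be natural numbers and let q be a nonzero binary form of degree k over ℂ. Then the ℂ-linear map p ↦ q(∂)p from the space of binary forms of degree n to the space of binary forms of degree n − k is surjective; consequently its kernel is a ℂ-subspace of dimension exactly k. -/
set_option synthInstance.maxHeartbeats 1000000


open MvPolynomial

/-- the basic operator family -/
noncomputable def FF (m : Fin 2 →₀ ℕ) : MvPolynomial (Fin 2) ℂ →ₗ[ℂ] MvPolynomial (Fin 2) ℂ :=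
  pd 0 ^ m 0 * pd 1 ^ m 1

lemma pd_apply (i : Fin 2) (p : MvPolynomial (Fin 2) ℂ) :
    pd i p = MvPolynomial.pderiv i p := rfl

lemma pd_comm (p : MvPolynomial (Fin 2) ℂ) :
    pd 0 (pd 1 p) = pd 1 (pd 0 p) := by
  induction p using MvPolynomial.induction_on' with
  | monomial d c =>
      simp only [pd_apply, MvPolynomial.pderiv_monomial]
      have h0 : (d - Finsupp.single (1 : Fin 2) 1 : Fin 2 →₀ ℕ) (0 : Fin 2) = d 0 := by
        simp [Finsupp.tsub_apply, Finsupp.single_apply]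
      have h1 : (d - Finsupp.single (0 : Fin 2) 1 : Fin 2 →₀ ℕ) (1 : Fin 2) = d 1 := by
        simp [Finsupp.tsub_apply, Finsupp.single_apply]
      rw [h0, h1]
      have : d - Finsupp.single 1 1 - Finsupp.single 0 1
          = d - Finsupp.single 0 1 - Finsupp.single 1 1 := by
        ext j; simp [Finsupp.tsub_apply]; omega
      rw [this]; ring_nf
  | add p q hp hq => simp only [map_add, hp, hq]

lemma commute_pd : Commute (pd 1) (pd 0) :=
  LinearMap.ext fun p => (pd_comm p).symm

lemma FF_add (e d : Fin 2 →₀ ℕ) : FF (e + d) = FF e * FF d := by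
  unfold FF
  rw [Finsupp.add_apply, Finsupp.add_apply, pow_add, pow_add]
  rw [mul_assoc, mul_assoc]
  congr 1
  rw [← mul_assoc, ← mul_assoc]
  congr 1
  exact ((commute_pd.pow_pow (e 1) (d 0))).symm

lemma apolarL_eq_lc (q : MvPolynomial (Fin 2) ℂ) :
    apolarL q = Finsupp.linearCombination ℂ FF (AddMonoidAlgebra.coeff q) := by
  rw [apolarL, Finsupp.linearCombination_apply, Finsupp.sum]
  rfl

lemma apolarL_add (a b : MvPolynomial (Fin 2) ℂ) :
    apolarL (a + b) = apolarL a + apolarL b := by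
  simp only [apolarL_eq_lc]; exact map_add _ (AddMonoidAlgebra.coeff a) (AddMonoidAlgebra.coeff b)

lemma apolarL_monomial (e : Fin 2 →₀ ℕ) (c : ℂ) :
    apolarL (MvPolynomial.monomial e c) = c • FF e := by
  rw [apolarL_eq_lc, ← MvPolynomial.single_eq_monomial]
  exact Finsupp.linearCombination_single ..

lemma apolarL_mul (a b : MvPolynomial (Fin 2) ℂ) :
    apolarL (a * b) = apolarL a * apolarL b := by
  induction a using MvPolynomial.induction_on' with
  | add p q hp hq => rw [add_mul, apolarL_add, apolarL_add, hp, hq, add_mul]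
  | monomial e c =>
      induction b using MvPolynomial.induction_on' with
      | add p q hp hq => rw [mul_add, apolarL_add, apolarL_add, hp, hq, mul_add]
      | monomial d c' =>
          rw [MvPolynomial.monomial_mul, apolarL_monomial, apolarL_monomial,
            apolarL_monomial, FF_add, smul_mul_smul_comm]

lemma pd_pow_monomial (i : Fin 2) (a : ℕ) (d : Fin 2 →₀ ℕ) (c : ℂ) :
    (pd i ^ a) (MvPolynomial.monomial d c)
      = MvPolynomial.monomial (d - Finsupp.single i a) (((d i).descFactorial a : ℂ) * c) := by
  induction a with
  | zero => simp
  | succ a ih =>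
      rw [pow_succ', Module.End.mul_apply, ih, pd_apply, MvPolynomial.pderiv_monomial]
      have h1 : (d - Finsupp.single i a : Fin 2 →₀ ℕ) i = d i - a := by
        simp [Finsupp.tsub_apply]
      have h2 : d - Finsupp.single i a - Finsupp.single i 1 = d - Finsupp.single i (a + 1) := by
        ext j
        by_cases hj : j = i
        · subst hj; simp [Finsupp.tsub_apply]; omega
        · simp [Finsupp.tsub_apply, Finsupp.single_apply, Ne.symm hj]
      rw [h1, h2]
      congr 1
      rw [Nat.descFactorial_succ]
      push_cast
      ring

lemma FF_monomial (e d : Fin 2 →₀ ℕ) (c : ℂ) :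
    FF e (MvPolynomial.monomial d c)
      = MvPolynomial.monomial (d - Finsupp.single 1 (e 1) - Finsupp.single 0 (e 0))
          ((((d 0).descFactorial (e 0) : ℂ)) * ((((d 1).descFactorial (e 1) : ℂ)) * c)) := by
  show (pd 0 ^ e 0) ((pd 1 ^ e 1) (MvPolynomial.monomial d c)) = _
  rw [pd_pow_monomial, pd_pow_monomial]
  have h1 : (d - Finsupp.single (1 : Fin 2) (e 1) : Fin 2 →₀ ℕ) (0 : Fin 2) = d 0 := by
    simp [Finsupp.tsub_apply, Finsupp.single_apply]
  rw [h1]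

lemma apolarL_def' (q : MvPolynomial (Fin 2) ℂ) :
    apolarL q = q.support.sum fun e => q.coeff e • FF e := rfl

lemma degree_fin2 (d : Fin 2 →₀ ℕ) : d.degree = d 0 + d 1 := by
  rw [Finsupp.degree, ← Fin.sum_univ_two (f := fun i => d i)]
  exact Finset.sum_subset (Finset.subset_univ _)
    (fun i _ hi => Finsupp.notMem_support_iff.mp hi)

lemma apolarL_mem {k n : ℕ} {q p : MvPolynomial (Fin 2) ℂ}
    (hq : q.IsHomogeneous k) (hp : p.IsHomogeneous n) :
    (apolarL q p).IsHomogeneous (n - k) := by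
  rw [← MvPolynomial.mem_homogeneousSubmodule]
  have : apolarL q p = q.support.sum fun e => q.coeff e • FF e p := by
    rw [apolarL_def', LinearMap.coe_sum, Finset.sum_apply]
    simp only [LinearMap.smul_apply]
  rw [this]
  apply Submodule.sum_mem
  intro e he
  apply Submodule.smul_mem
  have hed : e.degree = k := by
    rw [Finsupp.degree_eq_weight_one]; exact hq (MvPolynomial.mem_support_iff.mp he)
  have hps : FF e p = p.support.sum fun d => FF e (MvPolynomial.monomial d (MvPolynomial.coeff d p)) := by
    conv_lhs => rw [p.as_sum]
    rw [map_sum]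
  rw [hps]
  apply Submodule.sum_mem
  intro d hd
  have hdd : d.degree = n := by
    rw [Finsupp.degree_eq_weight_one]; exact hp (MvPolynomial.mem_support_iff.mp hd)
  rw [FF_monomial, MvPolynomial.mem_homogeneousSubmodule]
  by_cases hle : e 0 ≤ d 0 ∧ e 1 ≤ d 1
  · apply MvPolynomial.isHomogeneous_monomial
    rw [degree_fin2]
    have h0 : (d - Finsupp.single 1 (e 1) - Finsupp.single 0 (e 0) : Fin 2 →₀ ℕ) (0 : Fin 2)
        = d 0 - e 0 := by simp [Finsupp.tsub_apply, Finsupp.single_apply]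
    have h1 : (d - Finsupp.single 1 (e 1) - Finsupp.single 0 (e 0) : Fin 2 →₀ ℕ) (1 : Fin 2)
        = d 1 - e 1 := by simp [Finsupp.tsub_apply, Finsupp.single_apply]
    rw [h0, h1]
    rw [degree_fin2] at hed hdd
    omega
  · have : ((d 0).descFactorial (e 0) : ℂ) * (((d 1).descFactorial (e 1) : ℂ) * MvPolynomial.coeff d p) = 0 := by
      rcases not_and_or.mp hle with h | h
      · rw [Nat.descFactorial_eq_zero_iff_lt.mpr (by omega)]; push_cast; ring
      · rw [Nat.descFactorial_eq_zero_iff_lt (n := d 1) (k := e 1) |>.mpr (by omega)]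
        push_cast; ring
    rw [this, MvPolynomial.monomial_zero]
    exact MvPolynomial.isHomogeneous_zero _ _ _

noncomputable def conjP (p : MvPolynomial (Fin 2) ℂ) : MvPolynomial (Fin 2) ℂ :=
  MvPolynomial.map (starRingEnd ℂ) p

lemma conjP_coeff (p : MvPolynomial (Fin 2) ℂ) (d : Fin 2 →₀ ℕ) :
    MvPolynomial.coeff d (conjP p) = starRingEnd ℂ (MvPolynomial.coeff d p) :=
  MvPolynomial.coeff_map _ _ _

lemma conjP_support (p : MvPolynomial (Fin 2) ℂ) : (conjP p).support = p.support := by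
  ext d
  simp only [MvPolynomial.mem_support_iff, conjP_coeff]
  exact not_congr (map_eq_zero_iff _ (RingHom.injective _)).symm.symm

lemma conjP_conjP (p : MvPolynomial (Fin 2) ℂ) : conjP (conjP p) = p := by
  rw [conjP, conjP, MvPolynomial.map_map]
  have : (starRingEnd ℂ).comp (starRingEnd ℂ) = RingHom.id ℂ := by
    ext z; simp
  rw [this, MvPolynomial.map_id]

lemma conjP_mul (a b : MvPolynomial (Fin 2) ℂ) : conjP (a * b) = conjP a * conjP b :=
  map_mul _ a b

lemma conjP_ne_zero {p : MvPolynomial (Fin 2) ℂ} (hp : p ≠ 0) : conjP p ≠ 0 := by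
  intro h
  apply hp
  rw [← conjP_conjP p, h, conjP, map_zero]

lemma conjP_isHomogeneous {p : MvPolynomial (Fin 2) ℂ} {m : ℕ} (hp : p.IsHomogeneous m) :
    (conjP p).IsHomogeneous m :=
  hp.map _

lemma coeff_zero_FF_monomial {m : ℕ} (e d : Fin 2 →₀ ℕ) (c : ℂ)
    (he : e.degree = m) (hd : d.degree = m) :
    MvPolynomial.coeff 0 (FF e (MvPolynomial.monomial d c))
      = if e = d then ((e 0).factorial : ℂ) * ((e 1).factorial : ℂ) * c else 0 := by
  rw [FF_monomial, MvPolynomial.coeff_monomial]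
  rw [degree_fin2] at he hd
  by_cases hed : e = d
  · subst hed
    rw [if_pos, if_pos rfl, Nat.descFactorial_self, Nat.descFactorial_self]
    · ring
    · ext j
      fin_cases j <;> simp [Finsupp.tsub_apply]
  · rw [if_neg hed]
    by_cases hle : e 0 ≤ d 0 ∧ e 1 ≤ d 1
    · exfalso
      apply hed
      have h0 : e 0 = d 0 := by omega
      have h1 : e 1 = d 1 := by omega
      ext j
      fin_cases j
      · exact h0
      · exact h1
    · have : ((d 0).descFactorial (e 0) : ℂ) * (((d 1).descFactorial (e 1) : ℂ) * c) = 0 := by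
        rcases not_and_or.mp hle with h | h
        · rw [Nat.descFactorial_eq_zero_iff_lt (n := d 0) (k := e 0) |>.mpr (by omega)]
          push_cast; ring
        · rw [Nat.descFactorial_eq_zero_iff_lt (n := d 1) (k := e 1) |>.mpr (by omega)]
          push_cast; ring
      rw [this, ite_self]

lemma pairing_expand {m : ℕ} (u v : MvPolynomial (Fin 2) ℂ)
    (hu : u.IsHomogeneous m) (hv : v.IsHomogeneous m) :
    pairing u v = ∑ e ∈ u.support, MvPolynomial.coeff e u *
      (if e ∈ v.support then ((e 0).factorial : ℂ) * ((e 1).factorial : ℂ) * MvPolynomial.coeff e v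
       else 0) := by
  rw [pairing]
  have h1 : apolarL u v = ∑ e ∈ u.support, MvPolynomial.coeff e u • FF e v := by
    rw [apolarL_def', LinearMap.coe_sum, Finset.sum_apply]
    simp only [LinearMap.smul_apply]
  rw [h1, MvPolynomial.coeff_sum]
  apply Finset.sum_congr rfl
  intro e he
  rw [MvPolynomial.coeff_smul, smul_eq_mul]
  congr 1
  have he' : e.degree = m := by
    rw [Finsupp.degree_eq_weight_one]; exact hu (MvPolynomial.mem_support_iff.mp he)
  have h2 : FF e v = ∑ d ∈ v.support, FF e (MvPolynomial.monomial d (MvPolynomial.coeff d v)) := by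
    conv_lhs => rw [v.as_sum]
    rw [map_sum]
  rw [h2, MvPolynomial.coeff_sum]
  have h3 : ∀ d ∈ v.support,
      MvPolynomial.coeff 0 (FF e (MvPolynomial.monomial d (MvPolynomial.coeff d v)))
        = if e = d then ((e 0).factorial : ℂ) * ((e 1).factorial : ℂ) * MvPolynomial.coeff d v
          else 0 := by
    intro d hd
    exact coeff_zero_FF_monomial e d _ he'
      (by rw [Finsupp.degree_eq_weight_one]; exact hv (MvPolynomial.mem_support_iff.mp hd))
  rw [Finset.sum_congr rfl h3, Finset.sum_ite_eq]

lemma pairing_conj_ne_zero {m : ℕ} (u : MvPolynomial (Fin 2) ℂ)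
    (hu : u.IsHomogeneous m) (h0 : u ≠ 0) : pairing u (conjP u) ≠ 0 := by
  rw [pairing_expand u (conjP u) hu (conjP_isHomogeneous hu), conjP_support]
  have hterm : ∀ e ∈ u.support,
      MvPolynomial.coeff e u * (if e ∈ u.support then
        ((e 0).factorial : ℂ) * ((e 1).factorial : ℂ) * MvPolynomial.coeff e (conjP u) else 0)
      = ((((e 0).factorial * (e 1).factorial : ℕ) : ℝ)
          * Complex.normSq (MvPolynomial.coeff e u) : ℝ) := by
    intro e he
    rw [if_pos he, conjP_coeff]
    have : MvPolynomial.coeff e u * (((e 0).factorial : ℂ) * ((e 1).factorial : ℂ)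
        * starRingEnd ℂ (MvPolynomial.coeff e u))
        = ((e 0).factorial : ℂ) * ((e 1).factorial : ℂ)
          * (MvPolynomial.coeff e u * starRingEnd ℂ (MvPolynomial.coeff e u)) := by ring
    rw [this, Complex.mul_conj]
    push_cast
    ring
  rw [Finset.sum_congr rfl hterm, ← Complex.ofReal_sum]
  rw [Complex.ofReal_ne_zero]
  apply ne_of_gt
  apply Finset.sum_pos'
  · intro e he
    exact mul_nonneg (Nat.cast_nonneg _) (Complex.normSq_nonneg _)
  · obtain ⟨e, he⟩ := (MvPolynomial.support_nonempty.mpr h0)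
    refine ⟨e, he, ?_⟩
    apply mul_pos
    · have : 0 < (e 0).factorial * (e 1).factorial :=
        Nat.mul_pos (Nat.factorial_pos _) (Nat.factorial_pos _)
      exact_mod_cast this
    · exact Complex.normSq_pos.mpr (MvPolynomial.mem_support_iff.mp he)

lemma fin2_finsupp_ext {d e : Fin 2 →₀ ℕ} (h0 : d 0 = e 0) (h1 : d 1 = e 1) : d = e := by
  ext j
  fin_cases j
  · exact h0
  · exact h1

lemma single_add_single_apply0 (a b : ℕ) :
    (Finsupp.single (0 : Fin 2) a + Finsupp.single (1 : Fin 2) b : Fin 2 →₀ ℕ) (0 : Fin 2) = a := by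
  simp [Finsupp.single_apply]

lemma single_add_single_apply1 (a b : ℕ) :
    (Finsupp.single (0 : Fin 2) a + Finsupp.single (1 : Fin 2) b : Fin 2 →₀ ℕ) (1 : Fin 2) = b := by
  simp [Finsupp.single_apply]

noncomputable def degEquiv (m : ℕ) :
    {d : Fin 2 →₀ ℕ // d ∈ {d : Fin 2 →₀ ℕ | d.degree = m}} ≃ Fin (m + 1) where
  toFun d := ⟨(d : Fin 2 →₀ ℕ) 0, by
    have hd : (d : Fin 2 →₀ ℕ).degree = m := d.2
    rw [degree_fin2] at hd
    omega⟩
  invFun i := ⟨Finsupp.single 0 (i : ℕ) + Finsupp.single 1 (m - (i : ℕ)), by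
    show Finsupp.degree _ = m
    rw [degree_fin2, single_add_single_apply0, single_add_single_apply1]
    have := i.isLt
    omega⟩
  left_inv d := by
    apply Subtype.ext
    have hd : (d : Fin 2 →₀ ℕ).degree = m := d.2
    rw [degree_fin2] at hd
    apply fin2_finsupp_ext
    · rw [single_add_single_apply0]
    · rw [single_add_single_apply1]
      show m - (d : Fin 2 →₀ ℕ) 0 = (d : Fin 2 →₀ ℕ) 1
      omega
  right_inv i := by
    apply Fin.ext
    show (Finsupp.single (0 : Fin 2) (i : ℕ) + Finsupp.single (1 : Fin 2) (m - (i : ℕ)) : Fin 2 →₀ ℕ) (0 : Fin 2) = (i : ℕ)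
    rw [single_add_single_apply0]

noncomputable def homogBasis (m : ℕ) :
    Module.Basis (Fin (m + 1)) ℂ (MvPolynomial.restrictSupport ℂ {d : Fin 2 →₀ ℕ | d.degree = m}) :=
  (MvPolynomial.basisRestrictSupport ℂ _).reindex (degEquiv m)

lemma homog_eq_restrict (m : ℕ) :
    MvPolynomial.homogeneousSubmodule (Fin 2) ℂ m
      = MvPolynomial.restrictSupport ℂ {d : Fin 2 →₀ ℕ | d.degree = m} :=
  MvPolynomial.homogeneousSubmodule_eq_finsupp_supported (Fin 2) ℂ m

instance homog_fd (m : ℕ) :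
    FiniteDimensional ℂ (MvPolynomial.homogeneousSubmodule (Fin 2) ℂ m) := by
  rw [homog_eq_restrict]
  exact Module.Finite.of_basis (homogBasis m)

lemma finrank_homog (m : ℕ) :
    Module.finrank ℂ (MvPolynomial.homogeneousSubmodule (Fin 2) ℂ m) = m + 1 := by
  rw [homog_eq_restrict]
  rw [Module.finrank_eq_card_basis (homogBasis m), Fintype.card_fin]

/-- For a nonzero binary form q of degree k ≤ n, the map p ↦ q(∂)p from degree-n
forms to degree-(n-k) forms is surjective, and its kernel has dimension k. -/
theorem apolar_surjective_kernel_dim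
    (n k : ℕ) (hkn : k ≤ n) (q : MvPolynomial (Fin 2) ℂ)
    (hq : q.IsHomogeneous k) (hq0 : q ≠ 0) :
    (∀ r : MvPolynomial (Fin 2) ℂ, r.IsHomogeneous (n - k) →
      ∃ p : MvPolynomial (Fin 2) ℂ, p.IsHomogeneous n ∧ apolarL q p = r) ∧
    Module.finrank ℂ
      ↥(MvPolynomial.homogeneousSubmodule (Fin 2) ℂ n ⊓ LinearMap.ker (apolarL q)) = k := by
  classical
  set Hn := MvPolynomial.homogeneousSubmodule (Fin 2) ℂ n with hHn
  set Hnk := MvPolynomial.homogeneousSubmodule (Fin 2) ℂ (n - k) with hHnk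
  have hmap : ∀ p ∈ Hn, apolarL q p ∈ Hnk := fun p hp => apolarL_mem hq hp
  let T : Hn →ₗ[ℂ] Hnk := (apolarL q).restrict hmap
  have hqc : (conjP q).IsHomogeneous k := conjP_isHomogeneous hq
  have hmul : ∀ p ∈ Hnk, (LinearMap.mulLeft ℂ (conjP q)) p ∈ Hn := by
    intro p hp
    have h1 : (conjP q * p).IsHomogeneous (k + (n - k)) := hqc.mul hp
    have h2 : k + (n - k) = n := by omega
    rw [h2] at h1
    exact h1
  let M : Hnk →ₗ[ℂ] Hn := (LinearMap.mulLeft ℂ (conjP q)).restrict hmul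
  let Cm : Hnk →ₗ[ℂ] Hnk := T.comp M
  have hCm : ∀ x : Hnk, (Cm x : MvPolynomial (Fin 2) ℂ) = apolarL q (conjP q * (x : MvPolynomial (Fin 2) ℂ)) := by
    intro x
    rfl
  have hCinj : Function.Injective Cm := by
    rw [← LinearMap.ker_eq_bot]
    rw [Submodule.eq_bot_iff]
    rintro ⟨p, hp⟩ hx
    have hx' : apolarL q (conjP q * p) = 0 := by
      have := congrArg (Subtype.val) (LinearMap.mem_ker.mp hx)
      rw [hCm] at this
      exact this
    apply Subtype.ext
    show p = 0
    by_contra hp0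
    have hph : p.IsHomogeneous (n - k) := hp
    have hu0 : conjP p * q ≠ 0 := mul_ne_zero (conjP_ne_zero hp0) hq0
    have huh : (conjP p * q).IsHomogeneous ((n - k) + k) := (conjP_isHomogeneous hph).mul hq
    apply pairing_conj_ne_zero (conjP p * q) huh hu0
    have hcu : conjP (conjP p * q) = conjP q * p := by
      rw [conjP_mul, conjP_conjP, mul_comm]
    rw [pairing, hcu, apolarL_mul, Module.End.mul_apply, hx', map_zero]
    exact MvPolynomial.coeff_zero 0
  have hCsurj : Function.Surjective Cm := (LinearMap.injective_iff_surjective).mp hCinj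
  have hsurj : ∀ r : MvPolynomial (Fin 2) ℂ, r.IsHomogeneous (n - k) →
      ∃ p : MvPolynomial (Fin 2) ℂ, p.IsHomogeneous n ∧ apolarL q p = r := by
    intro r hr
    obtain ⟨x, hx⟩ := hCsurj ⟨r, hr⟩
    refine ⟨conjP q * (x : MvPolynomial (Fin 2) ℂ), hmul _ x.2, ?_⟩
    have := congrArg Subtype.val hx
    rw [hCm] at this
    exact this
  refine ⟨hsurj, ?_⟩
  have hTsurj : Function.Surjective T := by
    rintro ⟨y, hy⟩
    obtain ⟨p, hp, hpe⟩ := hsurj y hy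
    exact ⟨⟨p, hp⟩, Subtype.ext hpe⟩
  have hrank := LinearMap.finrank_range_add_finrank_ker T
  rw [LinearMap.range_eq_top.mpr hTsurj] at hrank
  have hker : LinearMap.ker T = (Hn ⊓ LinearMap.ker (apolarL q)).comap Hn.subtype := by
    rw [LinearMap.ker_restrict hmap, Submodule.comap_inf, Submodule.comap_subtype_self,
      top_inf_eq]
  have hequiv := Submodule.comapSubtypeEquivOfLe
    (inf_le_left : Hn ⊓ LinearMap.ker (apolarL q) ≤ Hn)
  have hfr : Module.finrank ℂ (LinearMap.ker T)
      = Module.finrank ℂ ↥(Hn ⊓ LinearMap.ker (apolarL q)) := by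
    rw [hker]
    exact hequiv.finrank_eq
  rw [hfr] at hrank
  have h1 : Module.finrank ℂ Hn = n + 1 := finrank_homog n
  have h2 : Module.finrank ℂ (⊤ : Submodule ℂ Hnk) = (n - k) + 1 := by
    rw [finrank_top]
    exact finrank_homog (n - k)
  rw [h1, h2] at hrank
  omega
end

section
/- Let n ≥ k ≥ 1 be natural numbers and let ℓ₁ = a₁X + b₁Y, …, ℓ_k = a_kX + b_kY be nonzero, pairwise non-proportional linear forms in ℂ[X,Y]. Set q = ∏_{i=1}^k (b_i X − a_i Y). Then a binary form p of degree n satisfies q(∂)p = 0 if and only if p lies in the ℂ-span of ℓ₁ⁿ, …, ℓ_kⁿ; moreover this span has dimension k. -/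
open MvPolynomial

lemma pderiv_commute (i j : Fin 2) (p : MvPolynomial (Fin 2) ℂ) :
    pderiv i (pderiv j p) = pderiv j (pderiv i p) := by
  induction p using MvPolynomial.induction_on with
  | C a => simp [pderiv_C]
  | add p q hp hq => simp [map_add, hp, hq]
  | mul_X p k hp =>
    simp only [pderiv_mul, map_add, hp, pderiv_X, Pi.single_apply]
    split_ifs <;> simp <;> ring

lemma pd_commute : Commute (pd 0) (pd 1) := by
  apply LinearMap.ext
  intro p
  exact pderiv_commute 0 1 p

noncomputable def Dhom : Multiplicative (Fin 2 →₀ ℕ) →* Module.End ℂ (MvPolynomial (Fin 2) ℂ) where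
  toFun m := pd 0 ^ (Multiplicative.toAdd m) 0 * pd 1 ^ (Multiplicative.toAdd m) 1
  map_one' := by simp
  map_mul' x y := by
    show pd 0 ^ (Multiplicative.toAdd x + Multiplicative.toAdd y) 0 *
        pd 1 ^ (Multiplicative.toAdd x + Multiplicative.toAdd y) 1 = _
    simp only [Finsupp.add_apply, pow_add]
    rw [(pd_commute.pow_pow _ _).mul_mul_mul_comm]

noncomputable def apolarAlg :
    MvPolynomial (Fin 2) ℂ →ₐ[ℂ] Module.End ℂ (MvPolynomial (Fin 2) ℂ) :=
  AddMonoidAlgebra.lift ℂ _ (Fin 2 →₀ ℕ) Dhom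

lemma apolarL_eq (q : MvPolynomial (Fin 2) ℂ) : apolarL q = apolarAlg q := by
  rw [show apolarAlg q = _ from AddMonoidAlgebra.lift_apply Dhom q]
  rfl

lemma apolarAlg_X (i : Fin 2) : apolarAlg (X i) = pd i := by
  refine Eq.trans (AddMonoidAlgebra.lift_single Dhom (Finsupp.single i 1) 1) ?_
  show (1:ℂ) • (pd 0 ^ (Finsupp.single i 1) 0 * pd 1 ^ (Finsupp.single i 1) 1) = pd i
  fin_cases i <;> simp [Finsupp.single_apply]

lemma apolar_factor (A B : ℂ) :
    apolarL (C B * X 0 - C A * X 1) = B • pd 0 - A • pd 1 := by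
  rw [apolarL_eq]
  have h0 : (C B * X 0 - C A * X 1 : MvPolynomial (Fin 2) ℂ) = B • X 0 - A • X 1 := by
    rw [smul_eq_C_mul, smul_eq_C_mul]
  rw [h0, map_sub, map_smul, map_smul, apolarAlg_X, apolarAlg_X]

lemma pderiv_lin (i : Fin 2) (A B : ℂ) :
    pderiv i (lin A B) = if i = 0 then C A else C B := by
  fin_cases i <;>
    simp [lin, pderiv_C_mul, pderiv_X, Pi.single_apply, Fin.ext_iff]

lemma apolar_factor_pow (A B a' b' : ℂ) (n : ℕ) :
    apolarL (C B * X 0 - C A * X 1) (lin a' b' ^ n)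
      = ((n : ℂ) * (B * a' - A * b')) • lin a' b' ^ (n - 1) := by
  rw [apolar_factor]
  simp only [LinearMap.sub_apply, LinearMap.smul_apply]
  show B • pderiv 0 (lin a' b' ^ n) - A • pderiv 1 (lin a' b' ^ n) = _
  rw [pderiv_pow, pderiv_pow, pderiv_lin, pderiv_lin]
  rw [if_pos rfl, if_neg (by decide : (1 : Fin 2) ≠ 0)]
  rw [smul_eq_C_mul, smul_eq_C_mul, smul_eq_C_mul]
  simp only [map_sub, map_mul, MvPolynomial.C_eq_coe_nat]
  ring

lemma apolar_prod_pow {ι : Type} (s : Finset ι) (A B : ι → ℂ) (a' b' : ℂ) (n : ℕ)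
    (h : s.card ≤ n) :
    apolarL (∏ i ∈ s, (C (B i) * X 0 - C (A i) * X 1)) (lin a' b' ^ n)
      = (((n.descFactorial s.card : ℕ) : ℂ) * ∏ i ∈ s, (B i * a' - A i * b')) •
          lin a' b' ^ (n - s.card) := by
  classical
  induction s using Finset.induction_on with
  | empty =>
      simp only [Finset.prod_empty, Finset.card_empty, Nat.descFactorial_zero, Nat.cast_one,
        one_mul, Nat.sub_zero, one_smul]
      rw [apolarL_eq, map_one]
      rfl
  | @insert j s' hjs ih =>
      rw [Finset.card_insert_of_notMem hjs] at h
      simp only [Finset.prod_insert hjs, Finset.card_insert_of_notMem hjs]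
      have hcard : s'.card ≤ n := le_trans (Nat.le_succ _) h
      have key : apolarL ((C (B j) * X 0 - C (A j) * X 1) *
          ∏ i ∈ s', (C (B i) * X 0 - C (A i) * X 1)) (lin a' b' ^ n)
          = apolarL (C (B j) * X 0 - C (A j) * X 1)
              (apolarL (∏ i ∈ s', (C (B i) * X 0 - C (A i) * X 1)) (lin a' b' ^ n)) := by
        rw [apolarL_eq, apolarL_eq, apolarL_eq, map_mul]
        rfl
      rw [key, ih hcard, map_smul, apolar_factor_pow]
      rw [smul_smul]
      rw [show n - s'.card - 1 = n - (s'.card + 1) by omega]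
      congr 1
      rw [Nat.descFactorial_succ]
      push_cast [Nat.cast_sub hcard]
      ring

lemma lin_ne_zero_s4 {A B : ℂ} (h : (A, B) ≠ (0, 0)) : lin A B ≠ 0 := by
  intro h0
  apply h
  have h1 := congrArg (coeff (Finsupp.single 0 1)) h0
  have h2 := congrArg (coeff (Finsupp.single 1 1)) h0
  have e1 : (Finsupp.single (1 : Fin 2) 1) ≠ (Finsupp.single (0 : Fin 2) 1) := by
    intro he
    have := DFunLike.congr_fun he 0
    simp [Finsupp.single_apply] at this
  simp only [lin, coeff_add, coeff_C_mul, coeff_X', coeff_zero] at h1 h2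
  simp only [if_neg e1, if_neg (Ne.symm e1), if_true, mul_one, mul_zero, add_zero,
    zero_add] at h1 h2
  simp [h1, h2, Prod.ext_iff]

lemma lin_isHomogeneous (A B : ℂ) : (lin A B).IsHomogeneous 1 := by
  apply MvPolynomial.IsHomogeneous.add
  · simpa using (isHomogeneous_C (Fin 2) A).mul (isHomogeneous_X ℂ 0)
  · simpa using (isHomogeneous_C (Fin 2) B).mul (isHomogeneous_X ℂ 1)

lemma lin_pow_ne_zero {A B : ℂ} (h : (A, B) ≠ (0, 0)) (n : ℕ) : lin A B ^ n ≠ 0 :=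
  pow_ne_zero n (lin_ne_zero_s4 h)

lemma cross_ne_zero {A B A' B' : ℂ} (h1 : (A, B) ≠ (0, 0)) (h2 : (A', B') ≠ (0, 0))
    (hp : ∀ c : ℂ, lin A B ≠ c • lin A' B') : B' * A - A' * B ≠ 0 := by
  intro hc
  have key : ∀ c : ℂ, c • lin A' B' = lin (c * A') (c * B') := by
    intro c
    rw [lin, lin, smul_add, smul_eq_C_mul, smul_eq_C_mul, map_mul, map_mul]
    ring
  rcases eq_or_ne A' 0 with hA' | hA'
  · have hB' : B' ≠ 0 := by
      intro hB'; exact h2 (by simp [hA', hB', Prod.ext_iff])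
    have hA : A = 0 := by
      have : B' * A = 0 := by rw [hA'] at hc; linear_combination hc
      exact (mul_eq_zero.mp this).resolve_left hB'
    exact hp (B / B') (by rw [key]; congr 1 <;> field_simp [hA, hA'] <;> simp [hA, hA'])
  · exact hp (A / A') (by
      rw [key]; congr 1
      · field_simp
      · field_simp; linear_combination -hc)

lemma powers_linearIndependent {ι : Type} [Fintype ι] [DecidableEq ι] (n : ℕ)
    (A B : ι → ℂ) (hcard : Fintype.card ι ≤ n + 1)
    (hne : ∀ i, (A i, B i) ≠ (0, 0))
    (hcross : ∀ i j, i ≠ j → B i * A j - A i * B j ≠ 0) :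
    LinearIndependent ℂ (fun i => lin (A i) (B i) ^ n) := by
  rw [Fintype.linearIndependent_iff]
  intro g hg j
  set s : Finset ι := Finset.univ.erase j with hs
  have hscard : s.card ≤ n := by
    rw [hs, Finset.card_erase_of_mem (Finset.mem_univ j), Finset.card_univ]
    omega
  have h0 := congrArg (apolarL (∏ i ∈ s, (C (B i) * X 0 - C (A i) * X 1))) hg
  rw [map_sum, map_zero] at h0
  have hterm : ∀ i : ι, i ≠ j →
      apolarL (∏ i' ∈ s, (C (B i') * X 0 - C (A i') * X 1)) (g i • lin (A i) (B i) ^ n) = 0 := by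
    intro i hij
    rw [map_smul, apolar_prod_pow _ _ _ _ _ _ hscard]
    have : ∏ i' ∈ s, (B i' * A i - A i' * B i) = 0 := by
      apply Finset.prod_eq_zero (i := i)
      · rw [hs]; exact Finset.mem_erase.mpr ⟨hij, Finset.mem_univ i⟩
      · ring
    rw [this, mul_zero, zero_smul, smul_zero]
  rw [Finset.sum_eq_single j (fun i _ hij => hterm i hij) (by simp)] at h0
  rw [map_smul, apolar_prod_pow _ _ _ _ _ _ hscard] at h0
  have hd : ((n.descFactorial s.card : ℕ) : ℂ) ≠ 0 := by
    rw [Nat.cast_ne_zero]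
    intro h
    rw [Nat.descFactorial_eq_zero_iff_lt] at h
    omega
  have hpr : ∏ i' ∈ s, (B i' * A j - A i' * B j) ≠ 0 := by
    rw [Finset.prod_ne_zero_iff]
    intro i' hi'
    exact hcross i' j (Finset.mem_erase.mp hi').1
  have hl := lin_pow_ne_zero (hne j) (n - s.card)
  rw [smul_smul, smul_eq_zero] at h0
  rcases h0 with h0 | h0
  · rcases mul_eq_zero.mp h0 with h0 | h0
    · exact h0
    · exact absurd h0 (mul_ne_zero hd hpr)
  · exact absurd h0 hl

lemma degree_eq {n : ℕ} {p : MvPolynomial (Fin 2) ℂ} (hp : p.IsHomogeneous n)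
    {m : Fin 2 →₀ ℕ} (hm : m ∈ p.support) : m 0 + m 1 = n := by
  have h := hp (mem_support_iff.mp hm)
  rw [Finsupp.weight_apply, Finsupp.sum_fintype] at h
  · rw [Fin.sum_univ_two] at h
    simpa using h
  · intro i; simp

lemma monomial_mem_span {n : ℕ} (m : Fin 2 →₀ ℕ) (c : ℂ) (hm : m 0 + m 1 = n) :
    (monomial m c : MvPolynomial (Fin 2) ℂ) ∈ Submodule.span ℂ
      (Set.range fun j : Fin (n + 1) => (X 0 : MvPolynomial (Fin 2) ℂ) ^ (n - (j : ℕ)) * X 1 ^ (j : ℕ)) := by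
  have hj : m 1 < n + 1 := by omega
  have hmono : (monomial m c : MvPolynomial (Fin 2) ℂ)
      = c • ((X 0 : MvPolynomial (Fin 2) ℂ) ^ (n - m 1) * X 1 ^ (m 1)) := by
    rw [show n - m 1 = m 0 from by omega, monomial_eq, Finsupp.prod_fintype]
    · rw [Fin.prod_univ_two, smul_eq_C_mul]
    · intro i; simp
  rw [hmono]
  exact Submodule.smul_mem _ _ (Submodule.subset_span ⟨⟨m 1, hj⟩, rfl⟩)

lemma homog_mem_monomial_span {n : ℕ} {p : MvPolynomial (Fin 2) ℂ} (hp : p.IsHomogeneous n) :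
    p ∈ Submodule.span ℂ
      (Set.range fun j : Fin (n + 1) => (X 0 : MvPolynomial (Fin 2) ℂ) ^ (n - (j : ℕ)) * X 1 ^ (j : ℕ)) := by
  rw [p.as_sum]
  exact Submodule.sum_mem _ fun m hm => monomial_mem_span m _ (degree_eq hp hm)

lemma lin_pow_isHomogeneous (A B : ℂ) (n : ℕ) : (lin A B ^ n).IsHomogeneous n := by
  simpa using (lin_isHomogeneous A B).pow n

lemma powers_span {ι : Type} [Fintype ι] (n : ℕ) (A B : ι → ℂ)
    (hcard : Fintype.card ι = n + 1)
    (hne : ∀ i, (A i, B i) ≠ (0, 0))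
    (hcross : ∀ i j, i ≠ j → B i * A j - A i * B j ≠ 0)
    {p : MvPolynomial (Fin 2) ℂ} (hp : p.IsHomogeneous n) :
    p ∈ Submodule.span ℂ (Set.range fun i => lin (A i) (B i) ^ n) := by
  classical
  set V := Submodule.span ℂ
    (Set.range fun j : Fin (n + 1) => (X 0 : MvPolynomial (Fin 2) ℂ) ^ (n - (j : ℕ)) * X 1 ^ (j : ℕ)) with hV
  set P := Submodule.span ℂ (Set.range fun i => lin (A i) (B i) ^ n) with hP
  have hPV : P ≤ V := by
    rw [hP, Submodule.span_le]
    rintro x ⟨i, rfl⟩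
    exact homog_mem_monomial_span (lin_pow_isHomogeneous (A i) (B i) n)
  haveI : FiniteDimensional ℂ V := FiniteDimensional.span_of_finite ℂ (Set.finite_range _)
  have h1 : Module.finrank ℂ P = n + 1 := by
    rw [hP, finrank_span_eq_card (powers_linearIndependent n A B (le_of_eq hcard) hne hcross),
      hcard]
  have h2 : Module.finrank ℂ V ≤ n + 1 := by
    have := finrank_range_le_card (R := ℂ)
      (fun j : Fin (n + 1) => (X 0 : MvPolynomial (Fin 2) ℂ) ^ (n - (j : ℕ)) * X 1 ^ (j : ℕ))
    simpa [Set.finrank] using this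
  have hPeq : P = V := Submodule.eq_of_le_of_finrank_le hPV (h2.trans_eq h1.symm)
  rw [hP] at hPeq ⊢
  rw [hPeq]
  exact homog_mem_monomial_span hp

/-- Squarefree apolarity lemma: for q = ∏ (b_i X − a_i Y) with the forms
a_i X + b_i Y nonzero and pairwise non-proportional, a degree-n form p satisfies
q(∂)p = 0 iff p lies in the span of the n-th powers of these linear forms, and
this span has dimension k. -/
theorem apolarity_lemma_squarefree
    (n k : ℕ) (hk : 1 ≤ k) (hkn : k ≤ n) (a b : Fin k → ℂ)
    (hne : ∀ i, (a i, b i) ≠ (0, 0))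
    (hprop : ∀ i j, i ≠ j → ∀ c : ℂ, lin (a i) (b i) ≠ c • lin (a j) (b j))
    (q : MvPolynomial (Fin 2) ℂ)
    (hq : q = ∏ i : Fin k,
      (MvPolynomial.C (b i) * MvPolynomial.X 0 - MvPolynomial.C (a i) * MvPolynomial.X 1)) :
    (∀ p : MvPolynomial (Fin 2) ℂ, p.IsHomogeneous n →
      (apolarL q p = 0 ↔
        p ∈ Submodule.span ℂ (Set.range fun i : Fin k => lin (a i) (b i) ^ n))) ∧
    Module.finrank ℂ
      ↥(Submodule.span ℂ (Set.range fun i : Fin k => lin (a i) (b i) ^ n)) = k := by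
  classical
  have hcross : ∀ i j : Fin k, i ≠ j → b i * a j - a i * b j ≠ 0 := fun i j hij =>
    cross_ne_zero (hne j) (hne i) (hprop j i hij.symm)
  have hkcard : k ≤ n := hkn
  -- q annihilates each generator
  have hker : ∀ i0 : Fin k, apolarL q (lin (a i0) (b i0) ^ n) = 0 := by
    intro i0
    rw [hq, apolar_prod_pow _ _ _ _ _ _ (by simpa using hkn)]
    have : ∏ i ∈ Finset.univ, (b i * a i0 - a i * b i0) = 0 :=
      Finset.prod_eq_zero (Finset.mem_univ i0) (by ring)
    rw [Finset.card_univ, Fintype.card_fin] at *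
    rw [this, mul_zero, zero_smul]
  -- the span is contained in the kernel
  have hspan_ker : Submodule.span ℂ (Set.range fun i : Fin k => lin (a i) (b i) ^ n)
      ≤ LinearMap.ker (apolarL q) := by
    rw [Submodule.span_le]
    rintro x ⟨i, rfl⟩
    exact LinearMap.mem_ker.mpr (hker i)
  -- choose extra directions
  obtain ⟨t, htinj, htavoid⟩ : ∃ t : Fin (n + 1 - k) → ℂ, Function.Injective t ∧
      ∀ j i, b i - a i * t j ≠ 0 := by
    set T : Finset ℂ := Finset.univ.image fun i : Fin k => b i / a i with hT
    have hinf : (↑T : Set ℂ)ᶜ.Infinite := T.finite_toSet.infinite_compl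
    set e := hinf.natEmbedding with he
    refine ⟨fun j => (e (j : ℕ)).1, ?_, ?_⟩
    · intro j1 j2 hj
      have := e.injective (Subtype.ext hj)
      exact Fin.val_injective this
    · intro j i
      intro h0
      rcases eq_or_ne (a i) 0 with ha | ha
      · rw [ha] at h0
        simp only [zero_mul, sub_zero] at h0
        exact hne i (by simp [ha, h0, Prod.ext_iff])
      · have : (e (j : ℕ)).1 = b i / a i := by
          field_simp
          linear_combination -h0
        have hmem : (e (j : ℕ)).1 ∈ (↑T : Set ℂ)ᶜ := (e (j : ℕ)).2
        apply hmem
        rw [this]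
        exact Finset.mem_coe.mpr (Finset.mem_image.mpr ⟨i, Finset.mem_univ i, rfl⟩)
  -- extended family
  set A' : Fin k ⊕ Fin (n + 1 - k) → ℂ := Sum.elim a fun _ => 1 with hA'
  set B' : Fin k ⊕ Fin (n + 1 - k) → ℂ := Sum.elim b fun j => t j with hB'
  have hcard' : Fintype.card (Fin k ⊕ Fin (n + 1 - k)) = n + 1 := by
    simp [Fintype.card_sum]; omega
  have hne' : ∀ i, (A' i, B' i) ≠ (0, 0) := by
    rintro (i | j) h
    · exact hne i (by simpa [hA', hB'] using h)
    · simp [hA', hB', Prod.ext_iff] at h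
  have hcross' : ∀ i j, i ≠ j → B' i * A' j - A' i * B' j ≠ 0 := by
    rintro (i1 | j1) (i2 | j2) hij
    · exact hcross i1 i2 (by simpa using hij)
    · simpa [hA', hB'] using htavoid j2 i1
    · intro h
      simp only [hA', hB', Sum.elim_inl, Sum.elim_inr] at h
      apply htavoid j1 i2
      linear_combination -h
    · have : j1 ≠ j2 := by simpa using hij
      simpa [hA', hB', sub_ne_zero] using fun hc => this (htinj hc)
  constructor
  · intro p hp
    constructor
    · intro hp0
      have hmem := powers_span n A' B' hcard' hne' hcross' hp
      rw [Submodule.mem_span_range_iff_exists_fun] at hmem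
      obtain ⟨c, hc⟩ := hmem
      -- apply apolarL q
      have h0 := congrArg (apolarL q) hc
      rw [map_sum, hp0] at h0
      rw [Fintype.sum_sum_type] at h0
      have hinl : ∀ i : Fin k,
          apolarL q (c (Sum.inl i) • lin (A' (Sum.inl i)) (B' (Sum.inl i)) ^ n) = 0 := by
        intro i
        rw [map_smul]
        simp only [hA', hB', Sum.elim_inl]
        rw [hker i, smul_zero]
      simp only [map_smul] at h0 hinl
      rw [Finset.sum_congr rfl (fun i _ => hinl i)] at h0
      simp only [Finset.sum_const_zero, zero_add] at h0
      -- coefficients d j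
      have hd : ∀ j : Fin (n + 1 - k), apolarL q (lin (A' (Sum.inr j)) (B' (Sum.inr j)) ^ n)
          = ((((n.descFactorial k : ℕ) : ℂ) * ∏ i : Fin k, (b i * 1 - a i * t j)) •
              lin 1 (t j) ^ (n - k)) := by
        intro j
        simp only [hA', hB', Sum.elim_inr]
        rw [hq, apolar_prod_pow _ _ _ _ _ _ (by simpa using hkn)]
        rw [Finset.card_univ, Fintype.card_fin]
      rw [Finset.sum_congr rfl (fun j _ => by rw [hd j])] at h0
      have hdne : ∀ j : Fin (n + 1 - k),
          (((n.descFactorial k : ℕ) : ℂ) * ∏ i : Fin k, (b i * 1 - a i * t j)) ≠ 0 := by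
        intro j
        apply mul_ne_zero
        · rw [Nat.cast_ne_zero]
          intro hz
          rw [Nat.descFactorial_eq_zero_iff_lt] at hz
          omega
        · rw [Finset.prod_ne_zero_iff]
          intro i _
          simpa using htavoid j i
      -- independence of the extra powers
      have hindep2 : LinearIndependent ℂ (fun j : Fin (n + 1 - k) => lin 1 (t j) ^ (n - k)) := by
        apply powers_linearIndependent (n - k) (fun _ => 1) (fun j => t j)
        · simp; omega
        · intro j; simp [Prod.ext_iff]
        · intro j1 j2 hj
          simpa [sub_ne_zero] using fun hc => hj (htinj hc)
      rw [Fintype.linearIndependent_iff] at hindep2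
      have hcz : ∀ j, c (Sum.inr j) = 0 := by
        intro j
        have := hindep2 (fun j => c (Sum.inr j) *
            (((n.descFactorial k : ℕ) : ℂ) * ∏ i : Fin k, (b i * 1 - a i * t j))) ?_ j
        · exact (mul_eq_zero.mp this).resolve_right (hdne j)
        · refine Eq.trans (Finset.sum_congr rfl fun j _ => ?_) h0
          rw [mul_smul]
      -- conclude
      rw [← hc, Fintype.sum_sum_type]
      apply Submodule.add_mem
      · apply Submodule.sum_mem
        intro i _
        apply Submodule.smul_mem
        apply Submodule.subset_span
        exact ⟨i, by simp [hA', hB']⟩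
      · apply Submodule.sum_mem
        intro j _
        rw [hcz j, zero_smul]
        exact Submodule.zero_mem _
    · intro hmem
      exact LinearMap.mem_ker.mp (hspan_ker hmem)
  · rw [finrank_span_eq_card (powers_linearIndependent n a b (by simp; omega) hne
      (fun i j hij => hcross i j hij))]
    simp
end

section
/- Let n, k be natural numbers with 2k ≤ n + 1. Identify binary forms of degree n over ℂ with their coefficient vectors in ℂ^{n+1}, writing p = Σ_{t=0}^{n} p_t X^t Y^{n−t}. Let S_k ⊆ ℂ^{n+1} be the image of the map (ℂ²)^k → ℂ^{n+1} sending ((a₁,b₁), …, (a_k,b_k)) to the coefficient vector of Σ_{i=1}^{k} (a_i X + b_i Y)ⁿ. Then a binary form p of degree n has coefficient vector lying in the closure of S_k (for the standard topology of ℂ^{n+1}) if and only if there exists a nonzero binary form q of degree k with q(∂)p = 0. -/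
open MvPolynomial

namespace SecantAux

open Finset

abbrev P2 : Type := MvPolynomial (Fin 2) ℂ

noncomputable def Dop (m : Fin 2 →₀ ℕ) : P2 →ₗ[ℂ] P2 := pd 0 ^ m 0 * pd 1 ^ m 1

lemma apolarL_eq (q : P2) : apolarL q = (AddMonoidAlgebra.coeff q).sum fun m c => c • Dop m := rfl

lemma pd_apply (i : Fin 2) (p : P2) : pd i p = MvPolynomial.pderiv i p := rfl

lemma coeff_pderiv (i : Fin 2) (p : P2) (m : Fin 2 →₀ ℕ) :
    MvPolynomial.coeff m (MvPolynomial.pderiv i p)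
      = ((m i + 1 : ℕ) : ℂ) * MvPolynomial.coeff (m + Finsupp.single i 1) p := by
  induction p using MvPolynomial.induction_on' with
  | add p q hp hq => simp [hp, hq, mul_add]
  | monomial s a =>
    rw [pderiv_monomial, coeff_monomial, coeff_monomial]
    by_cases hs : s = m + Finsupp.single i 1
    · subst hs
      rw [if_pos (add_tsub_cancel_right _ _), if_pos rfl]
      simp [mul_comm]
    · rw [if_neg hs]
      by_cases hs2 : s - Finsupp.single i 1 = m
      · rw [if_pos hs2]
        have hsi : s i = 0 := by
          by_contra hne
          apply hs
          rw [← hs2, tsub_add_cancel_of_le]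
          rwa [Finsupp.single_le_iff, Nat.one_le_iff_ne_zero]
        simp [hsi]
      · rw [if_neg hs2, mul_zero]

lemma pderiv_comm (i j : Fin 2) (p : P2) :
    MvPolynomial.pderiv i (MvPolynomial.pderiv j p)
      = MvPolynomial.pderiv j (MvPolynomial.pderiv i p) := by
  apply MvPolynomial.ext
  intro m
  rw [coeff_pderiv, coeff_pderiv, coeff_pderiv, coeff_pderiv]
  rcases eq_or_ne i j with rfl | hij
  · ring_nf
  · simp only [Finsupp.add_apply, Finsupp.single_apply, if_neg hij, if_neg hij.symm, add_zero]
    rw [add_right_comm]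
    ring

lemma pd_commute (i j : Fin 2) : Commute (pd i) (pd j) := by
  apply LinearMap.ext
  intro p
  exact pderiv_comm i j p

lemma Dop_add (m m' : Fin 2 →₀ ℕ) : Dop (m + m') = Dop m * Dop m' := by
  unfold Dop
  rw [Finsupp.add_apply, Finsupp.add_apply, pow_add, pow_add]
  have hc : Commute (pd 1 ^ (m 1)) (pd 0 ^ (m' 0)) := ((pd_commute 1 0).pow_pow _ _)
  rw [mul_assoc, mul_assoc, ← mul_assoc (pd 1 ^ m 1), hc.eq, mul_assoc]

lemma Dop_zero : Dop 0 = 1 := by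
  unfold Dop; simp

lemma apolarL_monomial (m : Fin 2 →₀ ℕ) (c : ℂ) :
    apolarL (MvPolynomial.monomial m c) = c • Dop m := by
  rw [apolarL_eq]
  classical
  rcases eq_or_ne c 0 with rfl | hc
  · simp [MvPolynomial.monomial_zero]
  · rw [show (AddMonoidAlgebra.coeff ((MvPolynomial.monomial m) c : P2)).sum (fun m c => c • Dop m)
        = Finsupp.sum (Finsupp.single m c) (fun m c => c • Dop m) from rfl,
      Finsupp.sum_single_index]
    simp

lemma apolarL_add (q r : P2) : apolarL (q + r) = apolarL q + apolarL r := by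
  rw [apolarL_eq, apolarL_eq, apolarL_eq, AddMonoidAlgebra.coeff_add]
  exact Finsupp.sum_add_index' (fun m => zero_smul _ _) (fun m c c' => add_smul _ _ _)

lemma apolarL_mul (q r : P2) : apolarL (q * r) = apolarL q * apolarL r := by
  induction q using MvPolynomial.induction_on' with
  | add q1 q2 h1 h2 => rw [add_mul, apolarL_add, h1, h2, apolarL_add, add_mul]
  | monomial m c =>
    induction r using MvPolynomial.induction_on' with
    | add r1 r2 h1 h2 => rw [mul_add, apolarL_add, h1, h2, apolarL_add, mul_add]
    | monomial m' c' =>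
      rw [MvPolynomial.monomial_mul, apolarL_monomial, apolarL_monomial, apolarL_monomial,
        Dop_add, smul_mul_smul_comm]

lemma apolarL_one : apolarL 1 = 1 := by
  have : (1 : P2) = MvPolynomial.monomial 0 1 := by simp
  rw [this, apolarL_monomial, Dop_zero, one_smul]

lemma apolarL_C_mul (e : ℂ) (r : P2) : apolarL (MvPolynomial.C e * r) = e • apolarL r := by
  rw [apolarL_mul]
  have : (MvPolynomial.C e : P2) = MvPolynomial.monomial 0 e := by simp
  rw [this, apolarL_monomial, Dop_zero, smul_mul_assoc, one_mul]

lemma apolarL_X (i : Fin 2) : apolarL (MvPolynomial.X i) = pd i := by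
  have : (MvPolynomial.X i : P2) = MvPolynomial.monomial (Finsupp.single i 1) 1 := rfl
  rw [this, apolarL_monomial, one_smul]
  unfold Dop
  fin_cases i <;> simp

lemma apolarL_lin (c d : ℂ) : apolarL (lin c d) = c • pd 0 + d • pd 1 := by
  unfold lin
  rw [apolarL_add, apolarL_C_mul, apolarL_C_mul, apolarL_X, apolarL_X]

lemma pderiv_lin_pow (i : Fin 2) (a b : ℂ) (m : ℕ) :
    MvPolynomial.pderiv i (lin a b ^ m)
      = (m : ℂ) • ((if i = 0 then a else b) • lin a b ^ (m - 1)) := by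
  rw [MvPolynomial.pderiv_pow]
  unfold lin
  fin_cases i <;>
    simp [MvPolynomial.pderiv_X, smul_smul, mul_comm, mul_assoc, mul_left_comm,
      MvPolynomial.smul_eq_C_mul] <;> ring

lemma apolar_lin_lin_pow (c d a b : ℂ) (m : ℕ) :
    apolarL (lin c d) (lin a b ^ m)
      = ((m : ℂ) * (c * a + d * b)) • lin a b ^ (m - 1) := by
  rw [apolarL_lin]
  simp only [LinearMap.add_apply, LinearMap.smul_apply, pd_apply, pderiv_lin_pow]
  simp [smul_smul]
  rw [← add_smul]
  ring_nf


/-! ### Exponents, coefficient extraction and reconstruction -/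

noncomputable def μexp (m t : ℕ) : Fin 2 →₀ ℕ := Finsupp.single 0 t + Finsupp.single 1 (m - t)

lemma μexp_apply0 (m t : ℕ) : μexp m t 0 = t := by simp [μexp]

lemma μexp_apply1 (m t : ℕ) : μexp m t 1 = m - t := by
  simp [μexp, Finsupp.single_apply]

lemma μexp_inj {m t t' : ℕ} (h : μexp m t = μexp m t') : t = t' := by
  have := congrArg (fun f : Fin 2 →₀ ℕ => f 0) h
  simpa [μexp_apply0] using this

lemma fin2_decomp (d : Fin 2 →₀ ℕ) :
    d = Finsupp.single 0 (d 0) + Finsupp.single 1 (d 1) := by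
  ext j
  fin_cases j <;> simp [Finsupp.single_apply]

lemma degree_fin2 (d : Fin 2 →₀ ℕ) : d.degree = d 0 + d 1 := by
  rw [Finsupp.degree_apply]
  rw [Finset.sum_subset (Finset.subset_univ d.support)
    (fun x _ hx => Finsupp.notMem_support_iff.mp hx)]
  exact Fin.sum_univ_two d

lemma degree_μexp {m t : ℕ} (h : t ≤ m) : (μexp m t).degree = m := by
  rw [degree_fin2, μexp_apply0, μexp_apply1]
  omega

lemma isHomog_iff_degree (p : P2) (n : ℕ) :
    p.IsHomogeneous n ↔ ∀ d, MvPolynomial.coeff d p ≠ 0 → d.degree = n := by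
  unfold MvPolynomial.IsHomogeneous MvPolynomial.IsWeightedHomogeneous
  constructor
  · intro H d hd; rw [Finsupp.degree_eq_weight_one]; exact H hd
  · intro H d hd; have := H d hd; rw [Finsupp.degree_eq_weight_one] at this; exact this

noncomputable def Ecoef (m : ℕ) : P2 →ₗ[ℂ] (Fin (m+1) → ℂ) where
  toFun p := fun t => MvPolynomial.coeff (μexp m (t : ℕ)) p
  map_add' p q := by funext t; simp [MvPolynomial.coeff_add]
  map_smul' c p := by funext t; simp [MvPolynomial.coeff_smul]

noncomputable def Rpoly (m : ℕ) : (Fin (m+1) → ℂ) →ₗ[ℂ] P2 where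
  toFun w := ∑ t : Fin (m+1), MvPolynomial.monomial (μexp m (t : ℕ)) (w t)
  map_add' v w := by simp [Finset.sum_add_distrib]
  map_smul' c w := by simp [Finset.smul_sum, MvPolynomial.smul_monomial]

lemma Ecoef_apply (m : ℕ) (p : P2) (t : Fin (m+1)) :
    Ecoef m p t = MvPolynomial.coeff (μexp m (t : ℕ)) p := rfl

lemma E_R (m : ℕ) (w : Fin (m+1) → ℂ) : Ecoef m (Rpoly m w) = w := by
  funext t
  rw [Ecoef_apply, show Rpoly m w = ∑ t : Fin (m+1), MvPolynomial.monomial (μexp m (t:ℕ)) (w t)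
    from rfl, MvPolynomial.coeff_sum]
  rw [Finset.sum_eq_single t]
  · simp [MvPolynomial.coeff_monomial]
  · intro t' _ ht'
    rw [MvPolynomial.coeff_monomial, if_neg]
    intro hc
    exact ht' (Fin.ext (μexp_inj hc))
  · intro ht; exact absurd (Finset.mem_univ t) ht

lemma Rpoly_homog (m : ℕ) (w : Fin (m+1) → ℂ) : (Rpoly m w).IsHomogeneous m := by
  apply MvPolynomial.IsHomogeneous.sum
  intro t _
  exact MvPolynomial.isHomogeneous_monomial _ (degree_μexp (by omega))

lemma R_E {m : ℕ} {p : P2} (hp : p.IsHomogeneous m) : Rpoly m (Ecoef m p) = p := by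
  apply MvPolynomial.ext
  intro d
  rw [show Rpoly m (Ecoef m p)
      = ∑ t : Fin (m+1), MvPolynomial.monomial (μexp m (t:ℕ)) (Ecoef m p t) from rfl,
    MvPolynomial.coeff_sum]
  by_cases hd : MvPolynomial.coeff d p = 0
  · rw [hd]
    apply Finset.sum_eq_zero
    intro t _
    rw [MvPolynomial.coeff_monomial]
    split
    · next hμ => rw [Ecoef_apply, hμ, hd]
    · rfl
  · have hdeg : d.degree = m := (isHomog_iff_degree p m).mp hp d hd
    have hd0 : d 0 ≤ m := by rw [degree_fin2] at hdeg; omega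
    have hdμ : d = μexp m (d 0) := by
      rw [μexp, ← show d 1 = m - d 0 by rw [degree_fin2] at hdeg; omega]
      exact fin2_decomp d
    rw [Finset.sum_eq_single (⟨d 0, by omega⟩ : Fin (m+1))]
    · rw [MvPolynomial.coeff_monomial, if_pos (by rw [← hdμ]), Ecoef_apply, ← hdμ]
    · intro t' _ ht'
      rw [MvPolynomial.coeff_monomial, if_neg]
      intro hc
      apply ht'
      apply Fin.ext
      simp only []
      rw [hdμ] at hc
      exact μexp_inj hc
    · intro ht; exact absurd (Finset.mem_univ _) ht

lemma eq_zero_of_Ecoef {m : ℕ} {p : P2} (hp : p.IsHomogeneous m) (h : Ecoef m p = 0) :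
    p = 0 := by
  rw [← R_E hp, h, map_zero]

/-! ### Homogeneity and apolar operators -/

lemma pderiv_homog {p : P2} {m : ℕ} (i : Fin 2) (hp : p.IsHomogeneous m) :
    (MvPolynomial.pderiv i p).IsHomogeneous (m - 1) := by
  rw [isHomog_iff_degree] at hp ⊢
  intro d hd
  rw [coeff_pderiv] at hd
  have h2 : MvPolynomial.coeff (d + Finsupp.single i 1) p ≠ 0 := by
    intro h0; rw [h0, mul_zero] at hd; exact hd rfl
  have h3 := hp _ h2
  rw [degree_fin2] at h3 ⊢
  rw [Finsupp.add_apply, Finsupp.add_apply] at h3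
  fin_cases i <;> simp [Finsupp.single_apply] at h3 <;> omega

lemma pdpow_homog {p : P2} {m : ℕ} (i : Fin 2) (j : ℕ) (hp : p.IsHomogeneous m) :
    ((pd i ^ j) p).IsHomogeneous (m - j) := by
  induction j generalizing p m with
  | zero => simpa using hp
  | succ j ih =>
    rw [pow_succ, Module.End.mul_apply]
    have := ih (pderiv_homog i hp)
    rwa [show m - 1 - j = m - (j+1) by omega] at this

lemma Dop_homog {p : P2} {m : ℕ} (d : Fin 2 →₀ ℕ) (hp : p.IsHomogeneous m) :
    (Dop d p).IsHomogeneous (m - d.degree) := by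
  unfold Dop
  rw [Module.End.mul_apply, degree_fin2]
  have := pdpow_homog 0 (d 0) (pdpow_homog 1 (d 1) hp)
  rwa [show m - (d 1) - (d 0) = m - (d 0 + d 1) by omega] at this

lemma apolar_homog {q p : P2} {k m : ℕ} (hq : q.IsHomogeneous k) (hp : p.IsHomogeneous m) :
    (apolarL q p).IsHomogeneous (m - k) := by
  rw [apolarL_eq]
  have : ((AddMonoidAlgebra.coeff q).sum fun d c => c • Dop d) p = q.support.sum fun d => MvPolynomial.coeff d q • Dop d p := by
    rw [Finsupp.sum, LinearMap.coe_sum, Finset.sum_apply]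
    rfl
  rw [this]
  apply MvPolynomial.IsHomogeneous.sum
  intro d hd
  have hdeg : d.degree = k := by
    rw [isHomog_iff_degree] at hq
    exact hq d (MvPolynomial.mem_support_iff.mp hd)
  rw [← hdeg]
  rw [← MvPolynomial.mem_homogeneousSubmodule] at *
  exact Submodule.smul_mem _ _ (by rw [MvPolynomial.mem_homogeneousSubmodule]; exact Dop_homog d hp)

/-! ### The matrix of `ℓ(∂)` on coefficient vectors -/

noncomputable def Dmat (m : ℕ) (c d : ℂ) : (Fin (m+2) → ℂ) →ₗ[ℂ] (Fin (m+1) → ℂ) where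
  toFun v := fun t => c * ((t : ℕ) + 1 : ℕ) * v t.succ + d * ((m + 1 - (t : ℕ) : ℕ)) * v t.castSucc
  map_add' v w := by funext t; simp; ring
  map_smul' e v := by funext t; simp; ring

lemma Dmat_apply (m : ℕ) (c d : ℂ) (v : Fin (m+2) → ℂ) (t : Fin (m+1)) :
    Dmat m c d v t = c * ((t : ℕ) + 1 : ℕ) * v t.succ + d * ((m + 1 - (t : ℕ) : ℕ)) * v t.castSucc := rfl

lemma intertwine (m : ℕ) (c d : ℂ) (p : P2) :
    Ecoef m (apolarL (lin c d) p) = Dmat m c d (Ecoef (m+1) p) := by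
  funext t
  have ht : (t : ℕ) ≤ m := by omega
  have hμ0 : μexp m (t : ℕ) + Finsupp.single 0 1 = μexp (m+1) ((t : ℕ) + 1) := by
    unfold μexp
    rw [show m + 1 - ((t:ℕ)+1) = m - t by omega, add_right_comm, ← Finsupp.single_add]
  have hμ1 : μexp m (t : ℕ) + Finsupp.single 1 1 = μexp (m+1) (t : ℕ) := by
    unfold μexp
    rw [show m + 1 - (t:ℕ) = (m - t) + 1 by omega, add_assoc, ← Finsupp.single_add]
  rw [Ecoef_apply, apolarL_lin, Dmat_apply]
  simp only [LinearMap.add_apply, LinearMap.smul_apply, pd_apply, MvPolynomial.coeff_add,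
    MvPolynomial.coeff_smul, coeff_pderiv, hμ0, hμ1, smul_eq_mul]
  rw [Ecoef_apply, Ecoef_apply]
  have hts : ((t.succ : Fin (m+2)) : ℕ) = (t : ℕ) + 1 := rfl
  have htc : ((t.castSucc : Fin (m+2)) : ℕ) = (t : ℕ) := rfl
  rw [hts, htc, μexp_apply0, μexp_apply1]
  rw [show m - (t:ℕ) + 1 = m + 1 - (t:ℕ) by omega]
  ring

/-! ### Powers of linear forms -/

noncomputable def powVec (n : ℕ) (a b : ℂ) : Fin (n+1) → ℂ :=
  fun t => (n.choose (t : ℕ) : ℂ) * a ^ (t : ℕ) * b ^ (n - (t : ℕ))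

lemma lin_pow_eq (a b : ℂ) (m : ℕ) :
    lin a b ^ m = ∑ j ∈ Finset.range (m+1),
      MvPolynomial.monomial (μexp m j) (a ^ j * b ^ (m - j) * (m.choose j : ℂ)) := by
  unfold lin
  rw [add_pow]
  apply Finset.sum_congr rfl
  intro j hj
  rw [mul_pow, mul_pow, MvPolynomial.X_pow_eq_monomial, MvPolynomial.X_pow_eq_monomial]
  rw [show ((m.choose j : ℕ) : P2) = MvPolynomial.C ((m.choose j : ℕ) : ℂ) by
    rw [MvPolynomial.C_eq_coe_nat]]
  rw [← MvPolynomial.C_pow, ← MvPolynomial.C_pow]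
  rw [MvPolynomial.C_mul_monomial, MvPolynomial.C_mul_monomial, MvPolynomial.monomial_mul,
    mul_comm _ (MvPolynomial.C ((m.choose j : ℕ) : ℂ)), MvPolynomial.C_mul_monomial]
  unfold μexp
  congr 1
  ring

lemma lin_homog (a b : ℂ) : (lin a b).IsHomogeneous 1 := by
  unfold lin
  exact (MvPolynomial.isHomogeneous_C_mul_X a 0).add (MvPolynomial.isHomogeneous_C_mul_X b 1)

lemma lin_pow_homog (a b : ℂ) (m : ℕ) : (lin a b ^ m).IsHomogeneous m := by
  simpa using (lin_homog a b).pow m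

lemma Ecoef_lin_pow (n : ℕ) (a b : ℂ) : Ecoef n (lin a b ^ n) = powVec n a b := by
  funext t
  rw [Ecoef_apply, lin_pow_eq, MvPolynomial.coeff_sum]
  rw [Finset.sum_eq_single (t : ℕ)]
  · rw [MvPolynomial.coeff_monomial, if_pos rfl]
    unfold powVec; ring
  · intro j _ hj
    rw [MvPolynomial.coeff_monomial, if_neg (fun hc => hj (μexp_inj hc))]
  · intro ht
    exact absurd (Finset.mem_range.mpr (by omega)) ht

lemma lin_ne_zero {c d : ℂ} (h : ¬(c = 0 ∧ d = 0)) : lin c d ≠ 0 := by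
  intro h0
  apply h
  constructor
  · have := congrArg (MvPolynomial.coeff (Finsupp.single 0 1)) h0
    simpa [lin, MvPolynomial.coeff_C_mul, MvPolynomial.coeff_X', Finsupp.single_eq_single_iff]
      using this
  · have := congrArg (MvPolynomial.coeff (Finsupp.single 1 1)) h0
    simpa [lin, MvPolynomial.coeff_C_mul, MvPolynomial.coeff_X', Finsupp.single_eq_single_iff]
      using this


/-! ### Numerical identities -/

lemma nat_id1 (m t : ℕ) : (t+1) * (m+1).choose (t+1) = (m+1) * m.choose t := by
  rw [mul_comm, ← Nat.add_one_mul_choose_eq]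

lemma nat_id2 (m t : ℕ) (h : t ≤ m) : (m+1-t) * (m+1).choose t = (m+1) * m.choose t := by
  have h1 : (m+1).choose (m+1-t) = (m+1).choose t := Nat.choose_symm (by omega)
  rw [← h1, show m+1-t = (m-t)+1 by omega, mul_comm, ← Nat.add_one_mul_choose_eq,
    Nat.choose_symm h]

lemma Dmat_powVec (n : ℕ) (c d a b : ℂ) :
    Dmat n c d (powVec (n+1) a b) = (((n:ℂ)+1) * (c*a + d*b)) • powVec n a b := by
  funext t
  have ht : (t : ℕ) ≤ n := by omega
  rw [Dmat_apply]
  unfold powVec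
  simp only [Fin.val_succ, Fin.coe_castSucc, Pi.smul_apply, smul_eq_mul]
  rw [show n + 1 - ((t:ℕ)+1) = n - t by omega, show n+1-(t:ℕ) = (n - (t:ℕ))+1 by omega]
  have h1 := congrArg (Nat.cast (R := ℂ)) (nat_id1 n (t : ℕ))
  have h2 := congrArg (Nat.cast (R := ℂ)) (nat_id2 n (t : ℕ) ht)
  rw [show n+1-(t:ℕ) = (n - (t:ℕ))+1 by omega] at h2
  push_cast at h1 h2 ⊢
  linear_combination (c * a^((t:ℕ)+1) * b^(n-(t:ℕ))) * h1 +
    (d * a^(t:ℕ) * b^((n-(t:ℕ))+1)) * h2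

lemma powVec_smul (n : ℕ) (μ a b : ℂ) : powVec n (μ*a) (μ*b) = (μ^n) • powVec n a b := by
  funext t
  unfold powVec
  simp only [Pi.smul_apply, smul_eq_mul, mul_pow]
  rw [show μ^n = μ^(t:ℕ) * μ^(n - (t:ℕ)) by rw [← pow_add]; congr 1; omega]
  ring

lemma powVec_zero (n : ℕ) : powVec (n+1) 0 0 = 0 := by
  funext t
  unfold powVec
  rcases Nat.eq_zero_or_pos (t : ℕ) with h | h
  · rw [h]
    simp
  · rw [zero_pow (by omega)]
    simp

lemma powVec_e_ne_zero {c d : ℂ} (n : ℕ) (hcd : ¬(c = 0 ∧ d = 0)) :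
    powVec n d (-c) ≠ 0 := by
  intro h0
  rcases Classical.em (d = 0) with hd | hd
  · have hc : c ≠ 0 := fun hc => hcd ⟨hc, hd⟩
    have h2 := congrFun h0 ⟨0, by omega⟩
    unfold powVec at h2
    simp only [Nat.choose_zero_right, Nat.cast_one, one_mul, pow_zero, Nat.sub_zero,
      Pi.zero_apply, mul_one] at h2
    exact pow_ne_zero n (neg_ne_zero.mpr hc) h2
  · have h2 := congrFun h0 (Fin.last n)
    unfold powVec at h2
    simp only [Fin.val_last, Nat.choose_self, Nat.cast_one, one_mul, Nat.sub_self, pow_zero,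
      mul_one, Pi.zero_apply] at h2
    exact pow_ne_zero n hd h2

lemma Dmat_e (n : ℕ) (c d : ℂ) : Dmat n c d (powVec (n+1) d (-c)) = 0 := by
  rw [Dmat_powVec]
  rw [show c * d + d * (-c) = 0 by ring, mul_zero, zero_smul]

noncomputable def triSolve (c d : ℂ) (n : ℕ) (u : Fin (n+1) → ℂ) : ℕ → ℂ
  | 0 => 0
  | t+1 => ((if h : t < n+1 then u ⟨t, h⟩ else 0) - d * ((n + 1 - t : ℕ) : ℂ) * triSolve c d n u t)
      / (c * ((t + 1 : ℕ) : ℂ))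

lemma Dmat_surj {c d : ℂ} (n : ℕ) (hcd : ¬(c = 0 ∧ d = 0)) :
    Function.Surjective (Dmat n c d) := by
  intro u
  rcases Classical.em (c = 0) with hc | hc
  · subst hc
    have hd : d ≠ 0 := fun hd => hcd ⟨rfl, hd⟩
    refine ⟨fun s => if h : (s : ℕ) ≤ n then
      u ⟨(s:ℕ), by omega⟩ / (d * ((n + 1 - (s:ℕ) : ℕ) : ℂ)) else 0, ?_⟩
    funext t
    rw [Dmat_apply]
    simp only [Fin.coe_castSucc, Fin.val_succ, zero_mul, zero_add]
    rw [dif_pos (by omega : (t:ℕ) ≤ n)]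
    have hne : ((n + 1 - (t:ℕ) : ℕ) : ℂ) ≠ 0 := by rw [Nat.cast_ne_zero]; omega
    simp only [Fin.eta]
    rw [← mul_div_assoc, mul_div_cancel_left₀ _ (mul_ne_zero hd hne)]
  · refine ⟨fun s => triSolve c d n u (s : ℕ), ?_⟩
    funext t
    rw [Dmat_apply]
    simp only [Fin.coe_castSucc, Fin.val_succ, triSolve]
    rw [dif_pos (show (t:ℕ) < n+1 by omega)]
    simp only [Fin.eta]
    have hne : (((t:ℕ) + 1 : ℕ) : ℂ) ≠ 0 := by rw [Nat.cast_ne_zero]; omega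
    rw [← mul_div_assoc, mul_div_cancel_left₀ _ (mul_ne_zero hc hne)]
    ring

lemma exists_smul_of_ker {c d : ℂ} (n : ℕ) (hcd : ¬(c = 0 ∧ d = 0))
    (v : Fin (n+2) → ℂ) (hv : Dmat n c d v = 0) :
    ∃ τ : ℂ, v = τ • powVec (n+1) d (-c) := by
  set f := Dmat n c d with hf
  have hrange : LinearMap.range f = ⊤ := LinearMap.range_eq_top.mpr (Dmat_surj n hcd)
  have hdim : Module.finrank ℂ (LinearMap.ker f) = 1 := by
    have h1 := LinearMap.finrank_range_add_finrank_ker f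
    rw [hrange] at h1
    rw [finrank_top] at h1
    simp only [Module.finrank_fin_fun] at h1
    omega
  have hspan : (ℂ ∙ powVec (n+1) d (-c)) = LinearMap.ker f := by
    apply Submodule.eq_of_le_of_finrank_le
    · rw [Submodule.span_singleton_le_iff_mem]
      exact LinearMap.mem_ker.mpr (Dmat_e n c d)
    · rw [hdim, finrank_span_singleton (powVec_e_ne_zero (n+1) hcd)]
  have hv' : v ∈ (ℂ ∙ powVec (n+1) d (-c)) := by
    rw [hspan]
    exact LinearMap.mem_ker.mpr hv
  obtain ⟨τ, hτ⟩ := Submodule.mem_span_singleton.mp hv'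
  exact ⟨τ, hτ.symm⟩


/-! ### Secant sets of coefficient vectors -/

def Sset (k n : ℕ) : Set (Fin (n+1) → ℂ) :=
  Set.range (fun ab : Fin k → ℂ × ℂ => ∑ i, powVec n (ab i).1 (ab i).2)

lemma zero_mem_Sset_zero (n : ℕ) : (0 : Fin (n+1) → ℂ) ∈ Sset 0 n :=
  ⟨fun i => (0, 0), by simp⟩

lemma Sset_snoc {k n : ℕ} {x : Fin (n+1) → ℂ} (hx : x ∈ Sset k n) (a b : ℂ) :
    x + powVec n a b ∈ Sset (k+1) n := by
  obtain ⟨ab, rfl⟩ := hx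
  refine ⟨Fin.snoc ab (a, b), ?_⟩
  dsimp only
  rw [Fin.sum_univ_castSucc]
  simp

lemma exists_small_avoiding (B : Set ℂ) (hB : B.Finite) {δ : ℝ} (hδ : 0 < δ) :
    ∃ s : ℂ, dist s 0 < δ ∧ s ∉ B := by
  have hinf : ((fun r : ℝ => (r : ℂ)) '' Set.Ioo 0 δ).Infinite :=
    Set.Infinite.image (Set.injOn_of_injective Complex.ofReal_injective)
      (Set.Ioo_infinite hδ)
  obtain ⟨s, hs⟩ := (hinf.diff hB).nonempty
  obtain ⟨⟨r, hr, rfl⟩, hsB⟩ := hs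
  refine ⟨r, ?_, hsB⟩
  rw [dist_zero_right, Complex.norm_real, Real.norm_eq_abs, abs_of_pos hr.1]
  exact hr.2

lemma preimage_Sset_subset {c d : ℂ} (hcd : ¬(c = 0 ∧ d = 0)) (k n : ℕ)
    (y : Fin (n+2) → ℂ) (hy : Dmat n c d y ∈ Sset k n) :
    y ∈ closure (Sset (k+1) (n+1)) := by
  obtain ⟨ab, hab⟩ := hy
  obtain ⟨sec, hsec⟩ := (Dmat n c d).exists_rightInverse_of_surjective
      (LinearMap.range_eq_top.mpr (Dmat_surj n hcd))
  have hsec' : ∀ z, Dmat n c d (sec z) = z := fun z => by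
    have := congrArg (fun g => g z) hsec
    simpa using this
  rw [Metric.mem_closure_iff]
  intro ε hε
  set x₀ : Fin (n+1) → ℂ := Dmat n c d y with hx₀
  have hcont : Continuous sec := sec.continuous_of_finiteDimensional
  obtain ⟨δ, hδpos, hδ⟩ := Metric.continuous_iff.mp hcont x₀ ε hε
  set Φ : ℂ → (Fin (n+1) → ℂ) := fun s => ∑ i : Fin k,
      powVec n ((ab i).1 + s * (starRingEnd ℂ) c) ((ab i).2 + s * (starRingEnd ℂ) d) with hΦ
  have hΦ0 : Φ 0 = x₀ := by
    rw [hΦ]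
    simpa using hab
  have hΦcont : Continuous Φ := by
    rw [hΦ]
    apply continuous_pi
    intro t
    simp only [Finset.sum_apply]
    apply continuous_finset_sum
    intro i _
    unfold powVec
    fun_prop
  obtain ⟨δ₂, hδ₂pos, hδ₂⟩ := Metric.continuous_iff.mp hΦcont 0 δ hδpos
  have hsne : c * (starRingEnd ℂ) c + d * (starRingEnd ℂ) d ≠ 0 := by
    rw [Complex.mul_conj, Complex.mul_conj, ← Complex.ofReal_add, Ne, Complex.ofReal_eq_zero]
    intro h0
    have h1 : Complex.normSq c = 0 ∧ Complex.normSq d = 0 := by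
      constructor <;> nlinarith [Complex.normSq_nonneg c, Complex.normSq_nonneg d]
    exact hcd ⟨Complex.normSq_eq_zero.mp h1.1, Complex.normSq_eq_zero.mp h1.2⟩
  obtain ⟨s, hsδ, hsbad⟩ := exists_small_avoiding
    (Set.range (fun i : Fin k =>
      -(c * (ab i).1 + d * (ab i).2) / (c * (starRingEnd ℂ) c + d * (starRingEnd ℂ) d)))
    (Set.finite_range _) hδ₂pos
  set a' : Fin k → ℂ := fun i => (ab i).1 + s * (starRingEnd ℂ) c with ha'
  set b' : Fin k → ℂ := fun i => (ab i).2 + s * (starRingEnd ℂ) d with hb'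
  have hden : ∀ i, c * a' i + d * b' i ≠ 0 := by
    intro i h0
    apply hsbad
    refine ⟨i, ?_⟩
    rw [ha', hb'] at h0
    field_simp
    linear_combination -h0
  have hden' : ∀ i, ((n : ℂ) + 1) * (c * a' i + d * b' i) ≠ 0 := fun i =>
    mul_ne_zero (by
      rw [show ((n:ℂ)+1) = ((n+1 : ℕ) : ℂ) by push_cast; ring, Nat.cast_ne_zero]
      omega) (hden i)
  have hroots : ∀ i : Fin k, ∃ μ : ℂ, μ ^ (n+1) = (((n : ℂ) + 1) * (c * a' i + d * b' i))⁻¹ :=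
    fun i => IsAlgClosed.exists_pow_nat_eq _ (by omega)
  choose μ hμ using hroots
  set yt : Fin (n+2) → ℂ := ∑ i : Fin k, powVec (n+1) (μ i * a' i) (μ i * b' i) with hyt
  have hDyt : Dmat n c d yt = Φ s := by
    rw [hyt, map_sum, hΦ]
    apply Finset.sum_congr rfl
    intro i _
    rw [Dmat_powVec, powVec_smul, smul_smul]
    rw [show ((n:ℂ)+1) * (c * (μ i * a' i) + d * (μ i * b' i)) * μ i ^ n
        = μ i ^ (n+1) * (((n:ℂ)+1) * (c * a' i + d * b' i)) by ring]
    rw [hμ i, inv_mul_cancel₀ (hden' i), one_smul]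
  have hker : Dmat n c d (y - yt - sec (x₀ - Φ s)) = 0 := by
    rw [map_sub, map_sub, hsec', hDyt, ← hx₀]
    abel
  obtain ⟨τ, hτ⟩ := exists_smul_of_ker n hcd _ hker
  obtain ⟨ν, hν⟩ := IsAlgClosed.exists_pow_nat_eq τ (show 0 < n+1 by omega)
  have hνe : powVec (n+1) (ν * d) (ν * (-c)) = τ • powVec (n+1) d (-c) := by
    rw [powVec_smul, hν]
  set z : Fin (n+2) → ℂ := yt + powVec (n+1) (ν * d) (ν * (-c)) with hz
  have hzmem : z ∈ Sset (k+1) (n+1) := by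
    apply Sset_snoc
    exact ⟨fun i => (μ i * a' i, μ i * b' i), rfl⟩
  refine ⟨z, hzmem, ?_⟩
  have hyz : y - z = sec (x₀ - Φ s) := by
    rw [hz, hνe]
    rw [← hτ]
    abel
  have h5 : dist (Φ s) x₀ < δ := by
    rw [← hΦ0]
    exact hδ₂ s hsδ
  have h6 : dist (sec (Φ s)) (sec x₀) < ε := hδ (Φ s) h5
  rw [dist_eq_norm, hyz, map_sub, ← dist_eq_norm, dist_comm]
  exact h6

lemma lift_closure {c d : ℂ} (hcd : ¬(c = 0 ∧ d = 0)) (k n : ℕ) (v : Fin (n+2) → ℂ)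
    (hv : Dmat n c d v ∈ closure (Sset k n)) : v ∈ closure (Sset (k+1) (n+1)) := by
  set f := LinearMap.toContinuousLinearMap (Dmat n c d) with hf
  have hsurj : Function.Surjective f := Dmat_surj n hcd
  have hopen : IsOpenMap f := f.isOpenMap hsurj
  have h1 : v ∈ f ⁻¹' (closure (Sset k n)) := hv
  rw [hopen.preimage_closure_eq_closure_preimage f.continuous] at h1
  exact closure_minimal (fun y hy => preimage_Sset_subset hcd k n y hy) isClosed_closure h1

/-! ### The iterated-derivative predicate -/

def killed : (l : List (ℂ × ℂ)) → (n : ℕ) → (Fin (n+1) → ℂ) → Prop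
  | [], _, v => v = 0
  | _ :: _, 0, v => v = 0
  | x :: xs, (n+1), v => killed xs n (Dmat n x.1 x.2 v)

theorem killed_closure : ∀ (l : List (ℂ × ℂ)) (n : ℕ), 2 * l.length ≤ n + 1 →
    (∀ x ∈ l, ¬(x.1 = 0 ∧ x.2 = 0)) → ∀ v : Fin (n+1) → ℂ, killed l n v →
    v ∈ closure (Sset l.length n) := by
  intro l
  induction l with
  | nil =>
    intro n _ _ v hv
    rw [show v = 0 from hv]
    exact subset_closure (zero_mem_Sset_zero n)
  | cons x xs ih =>
    intro n hlen hne v hv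
    rcases n with _ | n
    · simp only [List.length_cons] at hlen; omega
    · have h1 : Dmat n x.1 x.2 v ∈ closure (Sset xs.length n) := by
        apply ih n (by simp only [List.length_cons] at hlen ⊢; omega)
          (fun y hy => hne y (List.mem_cons_of_mem x hy))
        exact hv
      have := lift_closure (hne x List.mem_cons_self) xs.length n v h1
      simpa using this

theorem killed_of_apolar : ∀ (l : List (ℂ × ℂ)) (n : ℕ) (p : P2), l.length ≤ n →
    apolarL (l.map (fun x => lin x.1 x.2)).prod p = 0 → killed l n (Ecoef n p) := by
  intro l
  induction l with
  | nil =>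
    intro n p _ hp
    rw [List.map_nil, List.prod_nil, apolarL_one] at hp
    show Ecoef n p = 0
    rw [show p = 0 from hp, map_zero]
  | cons x xs ih =>
    intro n p hlen hp
    rcases n with _ | n
    · simp only [List.length_cons] at hlen; omega
    · show killed xs n (Dmat n x.1 x.2 (Ecoef (n+1) p))
      rw [← intertwine]
      apply ih n _ (by simp only [List.length_cons] at hlen; omega)
      rw [← Module.End.mul_apply, ← apolarL_mul]
      rw [show (List.map (fun x => lin x.1 x.2) xs).prod * lin x.1 x.2
          = ((x :: xs).map (fun x => lin x.1 x.2)).prod by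
        rw [List.map_cons, List.prod_cons]; ring]
      exact hp


/-! ### Factorization of binary forms -/

noncomputable def φmap : P2 →ₐ[ℂ] Polynomial ℂ :=
  MvPolynomial.aeval ![Polynomial.X, 1]

lemma φ_monomial (d : Fin 2 →₀ ℕ) (c : ℂ) :
    φmap (MvPolynomial.monomial d c) = Polynomial.C c * Polynomial.X ^ (d 0) := by
  unfold φmap
  rw [MvPolynomial.aeval_monomial]
  rw [Finsupp.prod_fintype _ _ (fun i => pow_zero _)]
  rw [Fin.prod_univ_two]
  simp [Polynomial.algebraMap_eq]

lemma φ_Rpoly (k : ℕ) (w : Fin (k+1) → ℂ) :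
    φmap (Rpoly k w) = ∑ t : Fin (k+1), Polynomial.C (w t) * Polynomial.X ^ (t : ℕ) := by
  rw [show Rpoly k w = ∑ t : Fin (k+1), MvPolynomial.monomial (μexp k (t:ℕ)) (w t) from rfl,
    map_sum]
  apply Finset.sum_congr rfl
  intro t _
  rw [φ_monomial, μexp_apply0]

lemma coeff_φ_Rpoly (k : ℕ) (w : Fin (k+1) → ℂ) (j : Fin (k+1)) :
    (φmap (Rpoly k w)).coeff (j : ℕ) = w j := by
  rw [φ_Rpoly, Polynomial.finset_sum_coeff]
  rw [Finset.sum_eq_single j]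
  · simp
  · intro t _ ht
    rw [Polynomial.coeff_C_mul, Polynomial.coeff_X_pow, if_neg (by
      intro hc; exact ht (Fin.ext hc.symm)), mul_zero]
  · intro ht; exact absurd (Finset.mem_univ j) ht

lemma φ_inj_homog {q q' : P2} {k : ℕ} (hq : q.IsHomogeneous k) (hq' : q'.IsHomogeneous k)
    (h : φmap q = φmap q') : q = q' := by
  rw [← R_E hq, ← R_E hq']
  congr 1
  funext t
  have h1 := coeff_φ_Rpoly k (Ecoef k q) t
  have h2 := coeff_φ_Rpoly k (Ecoef k q') t
  rw [R_E hq] at h1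
  rw [R_E hq'] at h2
  rw [← h1, ← h2, h]

lemma natDegree_φ_le {q : P2} {k : ℕ} (hq : q.IsHomogeneous k) :
    (φmap q).natDegree ≤ k := by
  rw [Polynomial.natDegree_le_iff_coeff_eq_zero]
  intro m hm
  rw [← R_E hq, φ_Rpoly, Polynomial.finset_sum_coeff]
  apply Finset.sum_eq_zero
  intro t _
  rw [Polynomial.coeff_C_mul, Polynomial.coeff_X_pow, if_neg (by omega), mul_zero]

lemma lin_prod_homog (l : List (ℂ × ℂ)) :
    ((l.map fun x => lin x.1 x.2).prod).IsHomogeneous l.length := by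
  induction l with
  | nil => simpa using MvPolynomial.isHomogeneous_one (Fin 2) ℂ
  | cons x xs ih =>
    rw [List.map_cons, List.prod_cons, List.length_cons]
    have := (lin_homog x.1 x.2).mul ih
    rwa [add_comm] at this

lemma φ_lin (a b : ℂ) : φmap (lin a b) = Polynomial.C a * Polynomial.X + Polynomial.C b := by
  unfold φmap lin
  rw [map_add, map_mul, map_mul]
  simp [MvPolynomial.aeval_X, Polynomial.algebraMap_eq]

lemma factor_homog {q : P2} {k : ℕ} (hq : q ≠ 0) (hqh : q.IsHomogeneous k) :
    ∃ (e : ℂ) (l : List (ℂ × ℂ)), e ≠ 0 ∧ l.length = k ∧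
      (∀ x ∈ l, ¬(x.1 = 0 ∧ x.2 = 0)) ∧
      q = MvPolynomial.C e * (l.map (fun x => lin x.1 x.2)).prod := by
  set g := φmap q with hg
  have hg0 : g ≠ 0 := by
    intro h0
    exact hq (φ_inj_homog hqh (MvPolynomial.isHomogeneous_zero _ _ k)
      (by rw [← hg, h0, map_zero]))
  have hsplits := IsAlgClosed.splits g
  have hcard : g.roots.card = g.natDegree := Polynomial.splits_iff_card_roots.mp hsplits
  have hdeg : g.natDegree ≤ k := natDegree_φ_le hqh
  set L := g.roots.toList with hL
  have hLlen : L.length = g.natDegree := by rw [hL, Multiset.length_toList, hcard]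
  set l := (L.map fun r => ((1:ℂ), -r)) ++ List.replicate (k - g.natDegree) ((0:ℂ), (1:ℂ))
    with hl
  have hllen : l.length = k := by
    rw [hl, List.length_append, List.length_map, List.length_replicate, hLlen]
    omega
  refine ⟨g.leadingCoeff, l, Polynomial.leadingCoeff_ne_zero.mpr hg0, hllen, ?_, ?_⟩
  · intro x hx
    rw [hl, List.mem_append] at hx
    rcases hx with hx | hx
    · obtain ⟨r, _, rfl⟩ := List.mem_map.mp hx
      intro hc
      exact one_ne_zero hc.1
    · rw [List.eq_of_mem_replicate hx]
      intro hc
      exact one_ne_zero hc.2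
  · apply φ_inj_homog hqh
    · rw [← hllen]
      simpa using (lin_prod_homog l).C_mul g.leadingCoeff
    · rw [map_mul]
      rw [show φmap (MvPolynomial.C g.leadingCoeff) = Polynomial.C g.leadingCoeff by
        unfold φmap; rw [MvPolynomial.aeval_C, Polynomial.algebraMap_eq]]
      rw [show (φmap ((l.map fun x => lin x.1 x.2)).prod)
          = ((l.map fun x => lin x.1 x.2).map φmap).prod from map_list_prod φmap _]
      rw [hl, List.map_append, List.map_append, List.prod_append]
      have h1 : ((List.replicate (k - g.natDegree) ((0:ℂ), (1:ℂ))).map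
          (fun x : ℂ × ℂ => lin x.1 x.2)).map φmap = List.replicate (k - g.natDegree) 1 := by
        rw [List.map_replicate, List.map_replicate]
        congr 1
        rw [φ_lin]
        simp
      rw [h1, List.prod_replicate, one_pow, mul_one]
      have h2 : ((L.map (fun r => ((1:ℂ), -r))).map (fun x : ℂ × ℂ => lin x.1 x.2)).map φmap
          = L.map (fun r => Polynomial.X - Polynomial.C r) := by
        rw [List.map_map, List.map_map]
        apply List.map_congr_left
        intro r _
        show φmap (lin 1 (-r)) = _
        rw [φ_lin]
        simp [sub_eq_add_neg]
      rw [h2]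
      have h3 : (L.map fun r => Polynomial.X - Polynomial.C r).prod
          = (g.roots.map fun r => Polynomial.X - Polynomial.C r).prod := by
        rw [hL, ← Multiset.coe_toList g.roots, Multiset.map_coe, Multiset.prod_coe,
          Multiset.coe_toList]
      rw [h3, Polynomial.C_leadingCoeff_mul_prod_multiset_X_sub_C hcard]


/-! ### apolarL as a linear map in `q` -/

lemma apolarL_smul (c : ℂ) (q : P2) : apolarL (c • q) = c • apolarL q := by
  rw [MvPolynomial.smul_eq_C_mul, apolarL_C_mul]

lemma apolarL_zero : apolarL (0 : P2) = 0 := by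
  have := apolarL_smul 0 0
  simpa using this

noncomputable def monoQ (k : ℕ) (i : Fin (k+1)) : P2 :=
  MvPolynomial.monomial (μexp k (i : ℕ)) 1

lemma apolar_Rpoly_apply (k : ℕ) (w : Fin (k+1) → ℂ) (p : P2) :
    apolarL (Rpoly k w) p = ∑ i : Fin (k+1), w i • apolarL (monoQ k i) p := by
  have h1 : Rpoly k w = ∑ i : Fin (k+1), w i • monoQ k i := by
    rw [show Rpoly k w = ∑ t : Fin (k+1), MvPolynomial.monomial (μexp k (t:ℕ)) (w t) from rfl]
    apply Finset.sum_congr rfl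
    intro i _
    rw [monoQ, MvPolynomial.smul_monomial, smul_eq_mul, mul_one]
  rw [h1]
  have h2 : apolarL (∑ i : Fin (k+1), w i • monoQ k i)
      = ∑ i : Fin (k+1), w i • apolarL (monoQ k i) := by
    induction (Finset.univ : Finset (Fin (k+1))) using Finset.induction_on with
    | empty => simpa using apolarL_zero
    | insert a s hnotmem ih =>
      rw [Finset.sum_insert hnotmem, Finset.sum_insert hnotmem, apolarL_add, apolarL_smul, ih]
  rw [h2, LinearMap.sum_apply]
  apply Finset.sum_congr rfl
  intro i _
  rw [LinearMap.smul_apply]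

/-! ### The catalecticant matrix -/

noncomputable def catMat (n k : ℕ) (v : Fin (n+1) → ℂ) :
    Matrix (Fin (n-k+1)) (Fin (k+1)) ℂ :=
  Matrix.of fun s i => Ecoef (n-k) (apolarL (monoQ k i) (Rpoly n v)) s

lemma catMat_mulVec (n k : ℕ) (v : Fin (n+1) → ℂ) (w : Fin (k+1) → ℂ) :
    (catMat n k v).mulVec w = Ecoef (n-k) (apolarL (Rpoly k w) (Rpoly n v)) := by
  funext s
  rw [apolar_Rpoly_apply, map_sum, Finset.sum_apply]
  simp only [Matrix.mulVec, dotProduct, catMat, Matrix.of_apply]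
  apply Finset.sum_congr rfl
  intro i _
  rw [map_smul]
  simp [mul_comm]

noncomputable def detFun (n k : ℕ) (v : Fin (n+1) → ℂ) : ℂ :=
  ((catMat n k v).conjTranspose * catMat n k v).det

lemma detFun_continuous (n k : ℕ) : Continuous (detFun n k) := by
  have hA : Continuous (catMat n k) := by
    apply continuous_matrix
    intro s i
    exact ((LinearMap.proj s).comp
      ((Ecoef (n-k)).comp ((apolarL (monoQ k i)).comp (Rpoly n)))).continuous_of_finiteDimensional
  unfold detFun
  exact ((hA.matrix_conjTranspose).matrix_mul hA).matrix_det

section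
open scoped ComplexOrder

lemma detFun_eq_zero_iff (n k : ℕ) (v : Fin (n+1) → ℂ) :
    detFun n k v = 0 ↔ ∃ w : Fin (k+1) → ℂ, w ≠ 0 ∧ (catMat n k v).mulVec w = 0 := by
  unfold detFun
  constructor
  · intro h
    obtain ⟨w, hw, hw0⟩ := Matrix.exists_mulVec_eq_zero_iff.mpr h
    exact ⟨w, hw, (Matrix.conjTranspose_mul_self_mulVec_eq_zero _ _).mp hw0⟩
  · intro ⟨w, hw, hw0⟩
    apply Matrix.exists_mulVec_eq_zero_iff.mp
    exact ⟨w, hw, by rw [← Matrix.mulVec_mulVec, hw0, Matrix.mulVec_zero]⟩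

end

lemma Rpoly_ne_zero {k : ℕ} {w : Fin (k+1) → ℂ} (hw : w ≠ 0) : Rpoly k w ≠ 0 := by
  intro h0
  apply hw
  rw [← E_R k w, h0, map_zero]

lemma cat_iff_annihilator {n k : ℕ} (hk : k ≤ n) {p : P2} (hp : p.IsHomogeneous n) :
    (∃ w : Fin (k+1) → ℂ, w ≠ 0 ∧ (catMat n k (Ecoef n p)).mulVec w = 0) ↔
    (∃ q : P2, q ≠ 0 ∧ q.IsHomogeneous k ∧ apolarL q p = 0) := by
  constructor
  · intro ⟨w, hw, hw0⟩
    refine ⟨Rpoly k w, Rpoly_ne_zero hw, Rpoly_homog k w, ?_⟩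
    rw [catMat_mulVec, R_E hp] at hw0
    exact eq_zero_of_Ecoef (apolar_homog (Rpoly_homog k w) hp) hw0
  · intro ⟨q, hq, hqh, hq0⟩
    refine ⟨Ecoef k q, fun h0 => hq (eq_zero_of_Ecoef hqh h0), ?_⟩
    rw [catMat_mulVec, R_E hp, R_E hqh, hq0, map_zero]

/-! ### Sums of powers are annihilated -/

lemma exists_annihilator (n k : ℕ) (hkn : 2 * k ≤ n + 1) (ab : Fin k → ℂ × ℂ) :
    ∃ q : P2, q ≠ 0 ∧ q.IsHomogeneous k ∧
      apolarL q (∑ i : Fin k, lin (ab i).1 (ab i).2 ^ n) = 0 := by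
  rcases Nat.eq_zero_or_pos k with hk | hk
  · subst hk
    refine ⟨1, one_ne_zero, MvPolynomial.isHomogeneous_one _ _, ?_⟩
    rw [show (Finset.univ : Finset (Fin 0)) = ∅ from rfl, Finset.sum_empty, map_zero]
  · have hn : 1 ≤ n := by omega
    set g : Fin k → ℂ × ℂ := fun i =>
      if (ab i).1 = 0 ∧ (ab i).2 = 0 then ((0:ℂ), (1:ℂ)) else ((ab i).2, -(ab i).1) with hg
    have hgval : ∀ i, ((ab i).1 = 0 ∧ (ab i).2 = 0 → g i = ((0:ℂ), (1:ℂ)))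
        ∧ (¬((ab i).1 = 0 ∧ (ab i).2 = 0) → g i = ((ab i).2, -(ab i).1)) := by
      intro i
      constructor
      · intro hab; rw [hg]; simp only; rw [if_pos hab]
      · intro hab; rw [hg]; simp only; rw [if_neg hab]
    have hgne : ∀ i, ¬((g i).1 = 0 ∧ (g i).2 = 0) := by
      intro i
      rcases Classical.em ((ab i).1 = 0 ∧ (ab i).2 = 0) with hab | hab
      · rw [(hgval i).1 hab]
        simp
      · rw [(hgval i).2 hab]
        intro ⟨h1, h2⟩
        exact hab ⟨by simpa using h2, h1⟩
    refine ⟨∏ i : Fin k, lin (g i).1 (g i).2, ?_, ?_, ?_⟩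
    · rw [Finset.prod_ne_zero_iff]
      exact fun i _ => lin_ne_zero (hgne i)
    · have := MvPolynomial.IsHomogeneous.prod Finset.univ
        (fun i : Fin k => lin (g i).1 (g i).2) (fun _ => 1)
        (fun i _ => lin_homog (g i).1 (g i).2)
      simpa using this
    · rw [map_sum]
      apply Finset.sum_eq_zero
      intro i _
      rw [← Finset.mul_prod_erase Finset.univ _ (Finset.mem_univ i), mul_comm,
        apolarL_mul, Module.End.mul_apply]
      have hkey : apolarL (lin (g i).1 (g i).2) (lin (ab i).1 (ab i).2 ^ n) = 0 := by
        by_cases hab : (ab i).1 = 0 ∧ (ab i).2 = 0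
        · rw [show lin (ab i).1 (ab i).2 = 0 by rw [hab.1, hab.2]; simp [lin],
            zero_pow (by omega : n ≠ 0), map_zero]
        · rw [(hgval i).2 hab]
          rw [apolar_lin_lin_pow]
          rw [show (ab i).2 * (ab i).1 + -(ab i).1 * (ab i).2 = 0 by ring, mul_zero, zero_smul]
      rw [hkey, map_zero]


lemma sum_lin_pow_homog (n k : ℕ) (ab : Fin k → ℂ × ℂ) :
    (∑ i : Fin k, lin (ab i).1 (ab i).2 ^ n).IsHomogeneous n :=
  MvPolynomial.IsHomogeneous.sum _ _ _ (fun i _ => lin_pow_homog (ab i).1 (ab i).2 n)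

lemma Ecoef_sum_lin_pow (n k : ℕ) (ab : Fin k → ℂ × ℂ) :
    Ecoef n (∑ i : Fin k, lin (ab i).1 (ab i).2 ^ n)
      = ∑ i : Fin k, powVec n (ab i).1 (ab i).2 := by
  rw [map_sum]
  exact Finset.sum_congr rfl fun i _ => Ecoef_lin_pow n _ _

end SecantAux

/-- The closure of the set of sums of k n-th powers of linear forms (the cone over the
k-th secant variety of the rational normal curve) consists exactly of those degree-n
forms annihilated by some nonzero degree-k form, when 2k ≤ n + 1. -/
theorem secant_cone_closure_iff_apolar
    (n k : ℕ) (h : 2 * k ≤ n + 1)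
    (coeffVec : MvPolynomial (Fin 2) ℂ → (Fin (n + 1) → ℂ))
    (hcv : ∀ p t, coeffVec p t =
      MvPolynomial.coeff (Finsupp.single 0 (t : ℕ) + Finsupp.single 1 (n - (t : ℕ))) p)
    (S : Set (Fin (n + 1) → ℂ))
    (hS : S = Set.range fun ab : Fin k → ℂ × ℂ =>
      coeffVec (∑ i : Fin k, lin (ab i).1 (ab i).2 ^ n))
    (p : MvPolynomial (Fin 2) ℂ) (hp : p.IsHomogeneous n) :
    coeffVec p ∈ closure S ↔
      ∃ q : MvPolynomial (Fin 2) ℂ, q ≠ 0 ∧ q.IsHomogeneous k ∧ apolarL q p = 0 := by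
  classical
  have hk : k ≤ n := by omega
  have hcoeff : coeffVec = fun p => SecantAux.Ecoef n p := by
    funext p t
    rw [hcv]
    rfl
  have hS2 : S = SecantAux.Sset k n := by
    rw [hS, hcoeff]
    unfold SecantAux.Sset
    exact congrArg Set.range (funext fun ab => SecantAux.Ecoef_sum_lin_pow n k ab)
  constructor
  · intro hcl
    rw [hcoeff] at hcl
    have hZclosed : IsClosed (SecantAux.detFun n k ⁻¹' {0}) :=
      IsClosed.preimage (SecantAux.detFun_continuous n k) isClosed_singleton
    have hsub : S ⊆ SecantAux.detFun n k ⁻¹' {0} := by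
      rw [hS2]
      rintro v ⟨ab, rfl⟩
      dsimp only
      obtain ⟨q, hq, hqh, hq0⟩ := SecantAux.exists_annihilator n k h ab
      rw [Set.mem_preimage, ← SecantAux.Ecoef_sum_lin_pow n k ab, Set.mem_singleton_iff,
        SecantAux.detFun_eq_zero_iff]
      exact (SecantAux.cat_iff_annihilator hk (SecantAux.sum_lin_pow_homog n k ab)).mpr
        ⟨q, hq, hqh, hq0⟩
    have hmem := closure_minimal hsub hZclosed hcl
    rw [Set.mem_preimage, Set.mem_singleton_iff, SecantAux.detFun_eq_zero_iff] at hmem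
    exact (SecantAux.cat_iff_annihilator hk hp).mp hmem
  · intro ⟨q, hq, hqh, hq0⟩
    obtain ⟨e, l, he, hlen, hlne, hfac⟩ := SecantAux.factor_homog hq hqh
    have hprod : apolarL ((l.map fun x => lin x.1 x.2).prod) p = 0 := by
      rw [hfac, SecantAux.apolarL_C_mul] at hq0
      rw [LinearMap.smul_apply] at hq0
      exact (smul_eq_zero.mp hq0).resolve_left he
    have hkill := SecantAux.killed_of_apolar l n p (by omega) hprod
    have hmem := SecantAux.killed_closure l n (by rw [hlen]; omega) hlne _ hkill
    rw [hcoeff, hS2]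
    rw [hlen] at hmem
    exact hmem
end
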